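/- arXiv:2305.11748 — 4 statements merged into one kernel-verified Lean document; each statement's English description precedes it below -/
import Mathlib

section
/- Let $G$ be a forest and $B \subseteq V(G)$ a set of blue vertices. For each blue vertex $a$ with at least two white neighbors (an active vertex), one can assign a connected component of $G - B$ containing a white neighbor of $a$, in such a way that distinct active vertices are assigned distinct components. -/
open SimpleGraph

namespace ZqGame

variable {V : Type*}

/-- A blue vertex `v` forces the white vertex `w`, where only white vertices in
`Wallow` are taken into account (used for Rule 3, where play is restricted to the
subgraph induced by the blue set together with the returned white components). -/
def ForceIn (G : SimpleGraph V) (B : Set V) (Wallow : Set V) (v w : V) : Prop :=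
  v ∈ B ∧ w ∉ B ∧ w ∈ Wallow ∧ G.Adj v w ∧
    ∀ u, G.Adj v u → u ∉ B → u ∈ Wallow → u = w

/-- The standard color change rule: `v` is blue and `w` is its unique white neighbor. -/
def Force (G : SimpleGraph V) (B : Set V) (v w : V) : Prop :=
  ForceIn G B Set.univ v w

/-- The white connected component of `G - B` containing the white vertex `w`. -/
def WhiteComp (G : SimpleGraph V) (B : Set V) (w : V) : Set V :=
  {x | Relation.ReflTransGen (fun a b => G.Adj a b ∧ a ∉ B ∧ b ∉ B) w x}

/-- `W` is a white component, i.e. a connected component of `G - B`. -/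
def IsWhiteComp (G : SimpleGraph V) (B : Set V) (W : Set V) : Prop :=
  ∃ w, w ∉ B ∧ W = WhiteComp G B w

/-- An active vertex: a blue vertex with at least two white neighbors. -/
def Active (G : SimpleGraph V) (B : Set V) (a : V) : Prop :=
  a ∈ B ∧ ∃ w₁ w₂, w₁ ≠ w₂ ∧ G.Adj a w₁ ∧ G.Adj a w₂ ∧ w₁ ∉ B ∧ w₂ ∉ B

end ZqGame

open SimpleGraph


open Classical in
private noncomputable def ZqRoot {V : Type*} (G : SimpleGraph V) (x : V) : V :=
  (G.connectedComponentMk x).out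

private lemma zqroot_reachable {V : Type*} (G : SimpleGraph V) (x : V) :
    G.Reachable x (ZqRoot G x) := by
  have := Quot.out_eq (G.connectedComponentMk x)
  exact (ConnectedComponent.exact this).symm

private lemma zqroot_eq_of_reachable {V : Type*} {G : SimpleGraph V} {x y : V}
    (h : G.Reachable x y) : ZqRoot G x = ZqRoot G y := by
  unfold ZqRoot
  rw [ConnectedComponent.sound h]

/-- Key lemma: an active vertex has a white neighbor `w` such that every walk
from `w` to the root of its component passes through `a`. -/
private lemma key_neighbor {V : Type*} {G : SimpleGraph V} (hF : G.IsAcyclic) {B : Set V}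
    {a : V} (ha : ZqGame.Active G B a) :
    ∃ w, w ∉ B ∧ G.Adj a w ∧ ∀ p : G.Walk w (ZqRoot G a), a ∈ p.support := by
  classical
  obtain ⟨haB, w₁, w₂, hne, h1, h2, hb1, hb2⟩ := ha
  by_contra hcon
  push_neg at hcon
  obtain ⟨p₁, hp₁⟩ := hcon w₁ hb1 h1
  obtain ⟨p₂, hp₂⟩ := hcon w₂ hb2 h2
  -- a walk from w₁ to w₂ avoiding a
  have hq0 : a ∉ (p₁.append p₂.reverse).support := by
    rw [SimpleGraph.Walk.mem_support_append_iff]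
    simp [hp₁, hp₂]
  set q := (p₁.append p₂.reverse).toPath with hq
  have haq : a ∉ (q : G.Walk w₁ w₂).support := fun h =>
    hq0 (SimpleGraph.Walk.support_toPath_subset _ h)
  -- build the cycle a - w₁ - ... - w₂ - a
  have hpath : (SimpleGraph.Walk.cons h1 (q : G.Walk w₁ w₂)).IsPath := by
    rw [SimpleGraph.Walk.cons_isPath_iff]
    exact ⟨q.2, haq⟩
  have hedge : s(w₂, a) ∉ (SimpleGraph.Walk.cons h1 (q : G.Walk w₁ w₂)).edges := by
    intro h
    rw [SimpleGraph.Walk.edges_cons] at h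
    rcases List.mem_cons.mp h with h | h
    · rw [Sym2.eq_iff] at h
      rcases h with ⟨h, h'⟩ | ⟨h, h'⟩
      · exact hb2 (by rw [h]; exact haB)
      · exact hne h.symm
    · exact haq (SimpleGraph.Walk.snd_mem_support_of_mem_edges _ h)
  exact hF (SimpleGraph.Walk.cons h2.symm
      (SimpleGraph.Walk.cons h1 (q : G.Walk w₁ w₂)))
    (SimpleGraph.Path.cons_isCycle ⟨_, hpath⟩ h2.symm hedge)

/-- Separation extends along white components. -/
private lemma sep_extend {V : Type*} {G : SimpleGraph V} {B : Set V} {a w x r : V}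
    (haB : a ∈ B)
    (hsep : ∀ p : G.Walk w r, a ∈ p.support)
    (hwx : Relation.ReflTransGen (fun u v => G.Adj u v ∧ u ∉ B ∧ v ∉ B) w x) :
    ∀ p : G.Walk x r, a ∈ p.support := by
  induction hwx with
  | refl => exact hsep
  | tail hbc hrel ih =>
    intro p
    have := ih (SimpleGraph.Walk.cons hrel.1 p)
    rw [SimpleGraph.Walk.support_cons, List.mem_cons] at this
    rcases this with h | h
    · exact absurd (h ▸ haB) hrel.2.1
    · exact h

/-- Let `G` be a forest with blue set `B`. Then there is an assignment `Φ` of white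
components to active vertices such that each active vertex `a` is assigned a white
component of `G - B` containing a (white) neighbor of `a`, and distinct active
vertices are assigned distinct components. -/
theorem forest_active_component_assignment {V : Type*} (G : SimpleGraph V)
    (hF : G.IsAcyclic) (B : Set V) :
    ∃ Φ : V → Set V,
      (∀ a, ZqGame.Active G B a →
        ZqGame.IsWhiteComp G B (Φ a) ∧ ∃ w, w ∈ Φ a ∧ w ∉ B ∧ G.Adj a w) ∧
      (∀ a a', ZqGame.Active G B a → ZqGame.Active G B a' → a ≠ a' → Φ a ≠ Φ a') := by
  classical
  have key := fun (a : V) (ha : ZqGame.Active G B a) => key_neighbor hF ha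
  choose wsel hw1 hw2 hw3 using key
  refine ⟨fun a => if h : ZqGame.Active G B a then ZqGame.WhiteComp G B (wsel a h) else ∅,
      ?_, ?_⟩
  · intro a ha
    simp only [dif_pos ha]
    exact ⟨⟨wsel a ha, hw1 a ha, rfl⟩,
      wsel a ha, Relation.ReflTransGen.refl, hw1 a ha, hw2 a ha⟩
  · intro a a' ha ha' hne heq
    simp only [dif_pos ha, dif_pos ha'] at heq
    set w := wsel a ha with hwdef
    set w' := wsel a' ha' with hw'def
    -- w' is in the white component of w, and vice versa
    have hmem : Relation.ReflTransGen (fun u v => G.Adj u v ∧ u ∉ B ∧ v ∉ B) w w' := by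
      have : w' ∈ ZqGame.WhiteComp G B w' := Relation.ReflTransGen.refl
      rw [← heq] at this; exact this
    have hmem' : Relation.ReflTransGen (fun u v => G.Adj u v ∧ u ∉ B ∧ v ∉ B) w' w := by
      have : w ∈ ZqGame.WhiteComp G B w := Relation.ReflTransGen.refl
      rw [heq] at this; exact this
    -- roots agree
    have hreach : G.Reachable w w' := by
      rw [reachable_iff_reflTransGen]
      exact Relation.ReflTransGen.mono (p := G.Adj) (fun u v (h : G.Adj u v ∧ u ∉ B ∧ v ∉ B) => h.1) _ _ hmem
    have hroot : ZqRoot G a = ZqRoot G a' := by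
      calc ZqRoot G a = ZqRoot G w := zqroot_eq_of_reachable (hw2 a ha).reachable
        _ = ZqRoot G w' := zqroot_eq_of_reachable hreach
        _ = ZqRoot G a' := zqroot_eq_of_reachable (hw2 a' ha').symm.reachable
    set r := ZqRoot G a with hrdef
    -- every walk from w' to r contains a; every walk from w to r contains a'
    have hsepw' : ∀ p : G.Walk w' r, a ∈ p.support :=
      sep_extend ha.1 (hw3 a ha) hmem
    have hsepw : ∀ p : G.Walk w r, a' ∈ p.support := by
      have := sep_extend ha'.1 (hw3 a' ha') hmem'
      rw [← hroot] at this; exact this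
    -- every walk from a' to r contains a
    have hsa' : ∀ p : G.Walk a' r, a ∈ p.support := by
      intro p
      have := hsepw' (SimpleGraph.Walk.cons (hw2 a' ha').symm p)
      rw [SimpleGraph.Walk.support_cons, List.mem_cons] at this
      rcases this with h | h
      · exact absurd ha.1 (by rw [h]; exact hw1 a' ha')
      · exact h
    -- every walk from a to r contains a'
    have hsa : ∀ p : G.Walk a r, a' ∈ p.support := by
      intro p
      have := hsepw (SimpleGraph.Walk.cons (hw2 a ha).symm p)
      rw [SimpleGraph.Walk.support_cons, List.mem_cons] at this
      rcases this with h | h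
      · exact absurd ha'.1 (by rw [h]; exact hw1 a ha)
      · exact h
    -- derive a contradiction using a path from a to r
    obtain ⟨p0⟩ := zqroot_reachable G a
    set p := p0.toPath with hpdef
    have hp : (p : G.Walk a r).IsPath := p.2
    have ha'p : a' ∈ (p : G.Walk a r).support := hsa _
    have hap2 : a ∈ ((p : G.Walk a r).dropUntil a' ha'p).support := hsa' _
    have hspec := SimpleGraph.Walk.take_spec (p : G.Walk a r) ha'p
    have hnodup : ((p : G.Walk a r)).support.Nodup := hp.support_nodup
    rw [← hspec, SimpleGraph.Walk.support_append, List.nodup_append] at hnodup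
    have hat : a ∈ ((p : G.Walk a r).takeUntil a' ha'p).support :=
      SimpleGraph.Walk.start_mem_support _
    have hatail : a ∈ ((p : G.Walk a r).dropUntil a' ha'p).support.tail := by
      have := SimpleGraph.Walk.support_eq_cons ((p : G.Walk a r).dropUntil a' ha'p)
      rw [this, List.mem_cons] at hap2
      rcases hap2 with h | h
      · exact absurd h hne
      · exact h
    exact hnodup.2.2 a hat a hatail rfl
end

section
/- Let $G$ be a forest, $B \subseteq V(G)$, and let $A$ be a nonempty set of blue vertices each having at least two white neighbors. Suppose each $a \in A$ is assigned a distinct white component $W_a$ of $G - B$ containing a white child of $a$ (with respect to rooting each tree of $G$ at an active vertex it contains). Then for any nonempty subset $S \subseteq A$, there exists $a \in S$ that has exactly one white neighbor in the induced subgraph $G[B \cup \bigcup_{a' \in S} W_{a'}]$. -/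
open SimpleGraph

open SimpleGraph

section Aux

variable {V : Type*} {G : SimpleGraph V} {B : Set V}

private lemma path_eq' (hF : G.IsAcyclic) {u v : V} {p q : G.Walk u v}
    (hp : p.IsPath) (hq : q.IsPath) : p = q :=
  Subtype.ext_iff.mp (hF.path_unique ⟨p, hp⟩ ⟨q, hq⟩)

private lemma path_length_eq_dist' (hF : G.IsAcyclic) {u v : V} (p : G.Walk u v)
    (hp : p.IsPath) : p.length = G.dist u v := by
  classical
  obtain ⟨q, hq⟩ := p.reachable.exists_walk_length_eq_dist
  have h1 : p = q.bypass := path_eq' hF hp q.bypass_isPath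
  refine le_antisymm ?_ (SimpleGraph.dist_le p)
  rw [h1, ← hq]
  exact q.length_bypass_le

/-- from membership in a white component, produce a path avoiding `B`. -/
private lemma white_path (hw : w ∉ B) (hx : x ∈ ZqGame.WhiteComp G B w) :
    ∃ p : G.Walk w x, p.IsPath ∧ ∀ y ∈ p.support, y ∉ B := by
  classical
  have : ∃ p : G.Walk w x, ∀ y ∈ p.support, y ∉ B := by
    induction hx with
    | refl => exact ⟨Walk.nil, by simpa using hw⟩
    | tail hbc hstep ih =>
      obtain ⟨p, hp⟩ := ih
      obtain ⟨hadj, hb, hc⟩ := hstep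
      refine ⟨p.concat hadj, ?_⟩
      intro y hy
      rw [Walk.support_concat, List.mem_append] at hy
      rcases hy with hy | hy
      · exact hp y hy
      · simp at hy; subst hy; exact hc
  obtain ⟨p, hp⟩ := this
  exact ⟨p.bypass, p.bypass_isPath, fun y hy => hp y (p.support_bypass_subset hy)⟩

private lemma whiteComp_symm_trans {w x y : V} (hx : x ∈ ZqGame.WhiteComp G B w)
    (hy : y ∈ ZqGame.WhiteComp G B w) : y ∈ ZqGame.WhiteComp G B x := by
  have hsymm : Symmetric (fun a b => G.Adj a b ∧ a ∉ B ∧ b ∉ B) :=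
    fun a b ⟨h1, h2, h3⟩ => ⟨h1.symm, h3, h2⟩
  exact Relation.ReflTransGen.trans ((@Relation.ReflTransGen.stdSymm _ _ ⟨hsymm⟩).symm _ _ hx) hy

/-- position of a vertex on a path from `r` bounds its distance from `r`. -/
private lemma mem_path_dist_le (hF : G.IsAcyclic) {r v a : V} (p : G.Walk r v)
    (hp : p.IsPath) (ha : a ∈ p.support) :
    G.dist r a ≤ p.length ∧ (G.dist r a = p.length → a = v) := by
  classical
  have ht : (p.takeUntil a ha).IsPath := hp.takeUntil ha
  have hlen : (p.takeUntil a ha).length = G.dist r a := path_length_eq_dist' hF _ ht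
  have hle := p.length_takeUntil_le ha
  refine ⟨hlen ▸ hle, fun heq => ?_⟩
  have hspec := p.take_spec ha
  have hlens := congrArg Walk.length hspec
  rw [Walk.length_append] at hlens
  have : (p.dropUntil a ha).length = 0 := by omega
  exact Walk.eq_of_length_eq_zero this

/-- extending a path from the root to a vertex by an edge to a "child"
(a neighbor at distance one more) yields a path. -/
private lemma concat_child_isPath (hF : G.IsAcyclic) {r a w : V} (p : G.Walk r a)
    (hp : p.IsPath) (h : G.Adj a w) (hd : G.dist r w = p.length + 1) :
    (p.concat h).IsPath := by
  classical
  have hw : w ∉ p.support := by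
    intro hw
    have := (mem_path_dist_le hF p hp hw).1
    omega
  rw [Walk.isPath_def, Walk.support_concat]
  simp [List.nodup_append, hp.support_nodup, hw]
  exact fun x hx hxw => hw (hxw ▸ hx)

/-- If `b` is blue and lies on the (unique) path from `r` to `c`, and there is a
`B`-avoiding walk from `x` to `c`, then `b` lies on any path from `r` to `x`. -/
private lemma blue_mem_path (hF : G.IsAcyclic) {r x c b : V}
    (Pu : G.Walk r x) (hPu : Pu.IsPath)
    (Pc : G.Walk r c) (hPc : Pc.IsPath)
    (Q : G.Walk x c) (hQ : ∀ y ∈ Q.support, y ∉ B)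
    (hb : b ∈ Pc.support) (hbB : b ∈ B) : b ∈ Pu.support := by
  classical
  have h1 : (Pu.append Q).bypass = Pc :=
    path_eq' hF (Pu.append Q).bypass_isPath hPc
  have h2 : b ∈ (Pu.append Q).support := by
    rw [← h1] at hb
    exact (Pu.append Q).support_bypass_subset hb
  rw [Walk.mem_support_append_iff] at h2
  rcases h2 with h2 | h2
  · exact h2
  · exact absurd hbB (hQ b h2)

end Aux

/-- Let `G` be a forest, `B` a blue set, `A` a nonempty set of active vertices, and
`root` a choice of root for each connected component (constant on components, and an
active vertex on components containing a vertex of `A`). Suppose each `a ∈ A` is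
assigned a distinct white component `W a` containing a white child of `a` (a white
neighbor one step further from the root). Then for any nonempty `S ⊆ A` that White
may return, some `a ∈ S` has exactly one white neighbor in the subgraph induced by
`B` together with the components `W a'` for `a' ∈ S`, so Blue can perform a force. -/
theorem forest_rule3_force {V : Type*} (G : SimpleGraph V) (hF : G.IsAcyclic)
    (B : Set V) (A : Set V) (hA : A.Nonempty)
    (hAact : ∀ a ∈ A, ZqGame.Active G B a)
    (root : V → V)
    (hroot_reach : ∀ v, G.Reachable v (root v))
    (hroot_const : ∀ v w, G.Reachable v w → root v = root w)
    (hroot_active : ∀ a ∈ A, ZqGame.Active G B (root a))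
    (W : V → Set V)
    (hWcomp : ∀ a ∈ A, ZqGame.IsWhiteComp G B (W a))
    (hWchild : ∀ a ∈ A, ∃ w, w ∈ W a ∧ w ∉ B ∧ G.Adj a w ∧
      G.dist (root a) w = G.dist (root a) a + 1)
    (hWinj : ∀ a ∈ A, ∀ a' ∈ A, a ≠ a' → W a ≠ W a') :
    ∀ S ⊆ A, S.Nonempty →
      ∃ a ∈ S, ∃! w, G.Adj a w ∧ w ∈ ⋃ a' ∈ S, W a' := by
  classical
  intro S hSA hS
  set f : V → ℕ := fun a => G.dist (root a) a with hf
  -- choose a ∈ S minimizing f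
  obtain ⟨a, haS, hamin⟩ : ∃ a ∈ S, ∀ b ∈ S, f a ≤ f b := by
    have hne : (f '' S).Nonempty := hS.image f
    obtain ⟨a, haS, hfa⟩ := Nat.sInf_mem hne
    exact ⟨a, haS, fun b hb => hfa ▸ Nat.sInf_le ⟨b, hb, rfl⟩⟩
  have haA : a ∈ A := hSA haS
  obtain ⟨w, hwW, hwB, haw, hdw⟩ := hWchild a haA
  refine ⟨a, haS, w, ⟨haw, Set.mem_iUnion₂.2 ⟨a, haS, hwW⟩⟩, ?_⟩
  rintro u ⟨hau, hu⟩
  obtain ⟨a', ha'S, huW⟩ := Set.mem_iUnion₂.1 hu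
  have ha'A : a' ∈ A := hSA ha'S
  obtain ⟨w', hw'W, hw'B, ha'w', hdw'⟩ := hWchild a' ha'A
  obtain ⟨w₀, hw₀B, hWa'⟩ := hWcomp a' ha'A
  have hu₀ : u ∈ ZqGame.WhiteComp G B w₀ := by rw [hWa'] at huW; exact huW
  have hw'₀ : w' ∈ ZqGame.WhiteComp G B w₀ := by rw [hWa'] at hw'W; exact hw'W
  have huw' : u ∈ ZqGame.WhiteComp G B w' := whiteComp_symm_trans hw'₀ hu₀
  -- a B-avoiding path from w' to u
  obtain ⟨Q, hQpath, hQB⟩ := white_path hw'B huw'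
  have huB : u ∉ B := hQB u Q.end_mem_support
  have haB : a ∈ B := (hAact a haA).1
  have ha'B : a' ∈ B := (hAact a' ha'A).1
  -- roots agree
  set r : V := root a with hr
  have hrA' : root a' = r := by
    have h1 : root a' = root w' := hroot_const a' w' ha'w'.reachable
    have h2 : root w' = root u := hroot_const w' u Q.reachable
    have h3 : root u = root a := hroot_const u a hau.reachable.symm
    rw [h1, h2, h3]
  -- paths from the root
  have hra : G.Reachable r a := (hroot_reach a).symm
  have hra' : G.Reachable r a' := by
    have := (hroot_reach a').symm
    rwa [hrA'] at this
  obtain ⟨Pa0⟩ := hra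
  obtain ⟨Pa'0⟩ := hra'
  set Pa : G.Walk r a := Pa0.bypass with hPa_def
  set Pa' : G.Walk r a' := Pa'0.bypass with hPa'_def
  have hPa : Pa.IsPath := Pa0.bypass_isPath
  have hPa' : Pa'.IsPath := Pa'0.bypass_isPath
  have hPalen : Pa.length = G.dist r a := path_length_eq_dist' hF Pa hPa
  have hPa'len : Pa'.length = G.dist r a' := path_length_eq_dist' hF Pa' hPa'
  have hdw'r : G.dist r w' = G.dist r a' + 1 := by rw [← hrA']; exact hdw'
  -- the path from r to w'
  have hPw' : (Pa'.concat ha'w').IsPath :=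
    concat_child_isPath hF Pa' hPa' ha'w' (by rw [hdw'r, hPa'len])
  set Pw' : G.Walk r w' := Pa'.concat ha'w' with hPw'_def
  have ha'Pw' : a' ∈ Pw'.support := by
    rw [hPw'_def, Walk.support_concat, List.mem_append]
    exact Or.inl Pa'.end_mem_support
  have hfa : f a = G.dist r a := rfl
  have hfa' : f a' = G.dist r a' := by
    show G.dist (root a') a' = G.dist r a'
    rw [hrA']
  by_cases hmem : u ∈ Pa.support
  · -- u is "above" a : contradiction with minimality
    exfalso
    set Pu : G.Walk r u := Pa.takeUntil u hmem with hPu_def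
    have hPu : Pu.IsPath := hPa.takeUntil hmem
    have hPulen : Pu.length = G.dist r u := path_length_eq_dist' hF Pu hPu
    have ha'Pu : a' ∈ Pu.support :=
      blue_mem_path hF Pu hPu Pw' hPw' Q.reverse
        (fun y hy => hQB y (by rwa [Walk.support_reverse, List.mem_reverse] at hy))
        ha'Pw' ha'B
    obtain ⟨hle, heq⟩ := mem_path_dist_le hF Pu hPu ha'Pu
    have hne : a' ≠ u := fun h => huB (h ▸ ha'B)
    have hlt : G.dist r a' < Pu.length := lt_of_le_of_ne hle (fun h => hne (heq h))
    have hle2 : Pu.length ≤ Pa.length := Pa.length_takeUntil_le hmem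
    have := hamin a' ha'S
    rw [hfa, hfa'] at this
    omega
  · -- u is a child of a
    set Pu : G.Walk r u := Pa.concat hau with hPu_def
    have hPu : Pu.IsPath := by
      rw [hPu_def, Walk.isPath_def, Walk.support_concat]
      simp [List.nodup_append, hPa.support_nodup, hmem]
      exact fun x hx hxw => hmem (hxw ▸ hx)
    have hPulen : Pu.length = Pa.length + 1 := Walk.length_concat _ _
    have ha'Pu : a' ∈ Pu.support :=
      blue_mem_path hF Pu hPu Pw' hPw' Q.reverse
        (fun y hy => hQB y (by rwa [Walk.support_reverse, List.mem_reverse] at hy))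
        ha'Pw' ha'B
    obtain ⟨hle, heq⟩ := mem_path_dist_le hF Pu hPu ha'Pu
    have hne : a' ≠ u := fun h => huB (h ▸ ha'B)
    have hlt : G.dist r a' < Pu.length := lt_of_le_of_ne hle (fun h => hne (heq h))
    have hmin := hamin a' ha'S
    rw [hfa, hfa'] at hmin
    have hdeq : G.dist r a = G.dist r a' := by omega
    -- a lies on Pa', hence a = a'
    have haPu : a ∈ Pu.support := by
      rw [hPu_def, Walk.support_concat, List.mem_append]
      exact Or.inl Pa.end_mem_support
    have haPw' : a ∈ Pw'.support :=
      blue_mem_path hF Pw' hPw' Pu hPu Q hQB haPu haB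
    have haPa' : a ∈ Pa'.support := by
      rw [hPw'_def, Walk.support_concat, List.mem_append] at haPw'
      rcases haPw' with h | h
      · exact h
      · simp at h; exact absurd (h ▸ haB) hw'B
    obtain ⟨hle3, heq3⟩ := mem_path_dist_le hF Pa' hPa' haPa'
    have haa' : a = a' := heq3 (by rw [hPa'len, ← hdeq])
    -- now u and w are in the same white component, adjacent to blue a
    subst haa'
    obtain ⟨w₁, hw₁B, hWa⟩ := hWcomp a haA
    have hu₁ : u ∈ ZqGame.WhiteComp G B w₁ := by rw [hWa] at huW; exact huW
    have hw₁ : w ∈ ZqGame.WhiteComp G B w₁ := by rw [hWa] at hwW; exact hwW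
    have huww : u ∈ ZqGame.WhiteComp G B w := whiteComp_symm_trans hw₁ hu₁
    by_contra hne2
    obtain ⟨R, hRpath, hRB⟩ := white_path hwB huww
    have hR2 : (Walk.cons haw.symm (Walk.cons hau Walk.nil) : G.Walk w u).IsPath := by
      rw [Walk.isPath_def]
      simp only [Walk.support_cons, Walk.support_nil]
      refine List.nodup_cons.2 ⟨?_, List.nodup_cons.2 ⟨?_, List.nodup_singleton u⟩⟩
      · intro h
        simp at h
        rcases h with h | h
        · exact hwB (h ▸ haB)
        · exact hne2 h.symm
      · intro h
        simp at h
        exact huB (h ▸ haB)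
    have hReq : R = Walk.cons haw.symm (Walk.cons hau Walk.nil) :=
      path_eq' hF hRpath hR2
    have haR : a ∈ R.support := by
      rw [hReq]
      simp
    exact hRB a haR haB
end

section
/- For any graph $G$, any edge $e = vw \in E(G)$, and any nonnegative integer $q$: $\operatorname{Z}_q(G) \le \operatorname{Z}_q(G - e) + 2$. -/
open SimpleGraph

namespace ZqGame

variable {V : Type*}

/-- `Win G q B t` : in the `Z_q`-forcing game on `G` starting from blue set `B`,
Blue has a strategy spending at most `t` tokens that colors every vertex blue
against any (adversarial) play by White.
* `all` : every vertex is already blue.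
* `rule1` : spend one token to color an arbitrary vertex blue.
* `rule2` : a blue vertex with exactly one white neighbor forces it, for free.
* `rule3` : Blue announces a collection `𝒲` of at least `q + 1` white components;
  for every nonempty sub-collection `𝒮` that White may return, Blue can perform a
  Rule 2 force (`vf 𝒮 → wf 𝒮`) on the subgraph induced by `B` together with `⋃ 𝒮`,
  and continue from the resulting position. -/
inductive Win (G : SimpleGraph V) (q : ℕ) : Set V → ℕ → Prop
  | all (B : Set V) (t : ℕ) : (∀ v, v ∈ B) → Win G q B t
  | rule1 (B : Set V) (t : ℕ) (v : V) : Win G q (insert v B) t → Win G q B (t + 1)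
  | rule2 (B : Set V) (t : ℕ) (v w : V) :
      Force G B v w → Win G q (insert w B) t → Win G q B t
  | rule3 (B : Set V) (t : ℕ) (𝒲 : Finset (Set V))
      (vf wf : Finset (Set V) → V) :
      (∀ W ∈ 𝒲, IsWhiteComp G B W) → q + 1 ≤ 𝒲.card →
      (∀ 𝒮 : Finset (Set V), 𝒮 ⊆ 𝒲 → 𝒮.Nonempty →
        ForceIn G B (⋃₀ (𝒮 : Set (Set V))) (vf 𝒮) (wf 𝒮)) →
      (∀ 𝒮 : Finset (Set V), 𝒮 ⊆ 𝒲 → 𝒮.Nonempty →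
        Win G q (insert (wf 𝒮) B) t) →
      Win G q B t

/-- `Z_q(G, B)` : the minimum number of additional tokens Blue must spend to win the
`Z_q`-forcing game on `G` starting from blue set `B`. -/
noncomputable def cost (G : SimpleGraph V) (q : ℕ) (B : Set V) : ℕ :=
  sInf {t | Win G q B t}

/-- `Z_q(G)` : the `Z_q`-forcing number of `G`. -/
noncomputable def Zq (G : SimpleGraph V) (q : ℕ) : ℕ := cost G q ∅

end ZqGame

open SimpleGraph


namespace ZqGame

variable {V : Type*}

lemma mem_whiteComp_self (G : SimpleGraph V) (B : Set V) (x : V) :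
    x ∈ WhiteComp G B x := Relation.ReflTransGen.refl

lemma whiteComp_symm (G : SimpleGraph V) (B : Set V) :
    Symmetric (fun a b => G.Adj a b ∧ a ∉ B ∧ b ∉ B) :=
  fun _ _ h => ⟨h.1.symm, h.2.2, h.2.1⟩

lemma whiteComp_eq_of_mem {G : SimpleGraph V} {B : Set V} {w x : V}
    (hx : x ∈ WhiteComp G B w) : WhiteComp G B x = WhiteComp G B w := by
  ext y
  constructor
  · intro hy
    exact Relation.ReflTransGen.trans hx hy
  · intro hy
    exact Relation.ReflTransGen.trans
      (by haveI : Std.Symm (fun a b : V => G.Adj a b ∧ a ∉ B ∧ b ∉ B) := ⟨fun a b h => whiteComp_symm G B h⟩; exact Std.Symm.symm _ _ (hx : Relation.ReflTransGen (fun a b : V => G.Adj a b ∧ a ∉ B ∧ b ∉ B) w x)) hy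

lemma whiteComp_mono {G : SimpleGraph V} {B B' : Set V} (hs : B ⊆ B') (x : V) :
    WhiteComp G B' x ⊆ WhiteComp G B x := by
  intro y hy
  exact Relation.ReflTransGen.mono (r := fun a b => G.Adj a b ∧ a ∉ B' ∧ b ∉ B')
    (p := fun a b => G.Adj a b ∧ a ∉ B ∧ b ∉ B)
    (fun a b h => ⟨h.1, fun hB => h.2.1 (hs hB), fun hB => h.2.2 (hs hB)⟩) _ _ hy

lemma Win.mono_t {H : SimpleGraph V} {q t : ℕ} {B : Set V} (h : Win H q B t) :
    ∀ t', t ≤ t' → Win H q B t' := by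
  induction h with
  | all B t hall => exact fun t' _ => .all B t' hall
  | rule1 B t x hwin ih =>
      intro t' ht
      obtain ⟨t'', rfl⟩ : ∃ t'', t' = t'' + 1 := ⟨t' - 1, by omega⟩
      exact .rule1 B t'' x (ih t'' (by omega))
  | rule2 B t a b hf hwin ih => exact fun t' ht => .rule2 B t' a b hf (ih t' ht)
  | rule3 B t 𝒲 vf wf hc hcard hf hwin ih =>
      exact fun t' ht => .rule3 B t' 𝒲 vf wf hc hcard hf (fun 𝒮 h1 h2 => ih 𝒮 h1 h2 t' ht)

lemma Win.compl_finite {H : SimpleGraph V} {q t : ℕ} {B : Set V} (h : Win H q B t) :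
    Bᶜ.Finite := by
  induction h with
  | all B t hall =>
      have : Bᶜ = ∅ := by ext x; simp [hall x]
      simp [this]
  | rule1 B t x hwin ih =>
      refine (ih.insert x).subset ?_
      intro y hy
      by_cases hxy : y = x
      · simp [hxy]
      · exact Set.mem_insert_of_mem _ (by simp_all [Set.mem_insert_iff])
  | rule2 B t a b hf hwin ih =>
      refine (ih.insert b).subset ?_
      intro y hy
      by_cases hby : y = b
      · simp [hby]
      · exact Set.mem_insert_of_mem _ (by simp_all [Set.mem_insert_iff])
  | rule3 B t 𝒲 vf wf hc hcard hf hwin ih =>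
      have h𝒲ne : 𝒲.Nonempty := Finset.card_pos.mp (by omega)
      obtain ⟨W, hW⟩ := h𝒲ne
      have h1 : ({W} : Finset (Set V)) ⊆ 𝒲 := by simpa using hW
      have := ih {W} h1 (Finset.singleton_nonempty W)
      refine (this.insert (wf {W})).subset ?_
      intro y hy
      by_cases hby : y = wf {W}
      · simp [hby]
      · exact Set.mem_insert_of_mem _ (by simp_all [Set.mem_insert_iff])

lemma win_all_of_cover {H : SimpleGraph V} {q : ℕ} :
    ∀ (s : Finset V) (B : Set V), (∀ x, x ∉ B → x ∈ s) → Win H q B s.card := by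
  intro s
  induction s using Finset.strongInduction with
  | _ s ih =>
    intro B hcov
    by_cases hall : ∀ x, x ∈ B
    · exact .all B _ hall
    · push_neg at hall
      obtain ⟨x, hx⟩ := hall
      have hxs : x ∈ s := hcov x hx
      classical
      rw [← Finset.card_erase_add_one hxs]
      refine .rule1 B _ x ?_
      refine ih (s.erase x) (Finset.erase_ssubset hxs) (insert x B) ?_
      intro y hy
      refine Finset.mem_erase.mpr ⟨fun h => hy (h ▸ Set.mem_insert x B),
        hcov y (fun hB => hy (Set.mem_insert_of_mem x hB))⟩

section Transfer

variable {G : SimpleGraph V} {v w : V}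

lemma adj_transfer {B : Set V} (hv : v ∈ B) (hw : w ∈ B) {a b : V} (hb : b ∉ B)
    (h : G.Adj a b) : (G.deleteEdges {s(v, w)}).Adj a b := by
  rw [SimpleGraph.deleteEdges_adj]
  refine ⟨h, ?_⟩
  simp only [Set.mem_singleton_iff, Sym2.eq_iff]
  rintro (⟨rfl, rfl⟩ | ⟨rfl, rfl⟩)
  · exact hb hw
  · exact hb hv

lemma forceIn_transfer {B Wa : Set V} (hv : v ∈ B) (hw : w ∈ B) {a b : V}
    (h : ForceIn (G.deleteEdges {s(v, w)}) B Wa a b) : ForceIn G B Wa a b := by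
  obtain ⟨h1, h2, h3, h4, h5⟩ := h
  exact ⟨h1, h2, h3, ((SimpleGraph.deleteEdges_adj).mp h4).1,
    fun u hu hnB hWa => h5 u (adj_transfer hv hw hnB hu) hnB hWa⟩

lemma whiteComp_transfer {B : Set V} (hv : v ∈ B) (hw : w ∈ B) (x : V) :
    WhiteComp (G.deleteEdges {s(v, w)}) B x = WhiteComp G B x := by
  ext y
  constructor
  · intro hy
    exact Relation.ReflTransGen.mono (r := fun a b => (G.deleteEdges {s(v, w)}).Adj a b ∧ a ∉ B ∧ b ∉ B)
      (p := fun a b => G.Adj a b ∧ a ∉ B ∧ b ∉ B)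
      (fun a b h => ⟨((SimpleGraph.deleteEdges_adj).mp h.1).1, h.2.1, h.2.2⟩) _ _ hy
  · intro hy
    exact Relation.ReflTransGen.mono (r := fun a b => G.Adj a b ∧ a ∉ B ∧ b ∉ B)
      (p := fun a b => (G.deleteEdges {s(v, w)}).Adj a b ∧ a ∉ B ∧ b ∉ B)
      (fun a b h => ⟨adj_transfer hv hw h.2.2 h.1, h.2.1, h.2.2⟩) _ _ hy

lemma win_transfer {q t : ℕ} {B : Set V}
    (h : Win (G.deleteEdges {s(v, w)}) q B t) :
    v ∈ B → w ∈ B → Win G q B t := by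
  induction h with
  | all B t hall => exact fun _ _ => .all B t hall
  | rule1 B t x hwin ih =>
      exact fun hv hw => .rule1 B t x
        (ih (Set.mem_insert_of_mem _ hv) (Set.mem_insert_of_mem _ hw))
  | rule2 B t a b hf hwin ih =>
      exact fun hv hw => .rule2 B t a b (forceIn_transfer hv hw hf)
        (ih (Set.mem_insert_of_mem _ hv) (Set.mem_insert_of_mem _ hw))
  | rule3 B t 𝒲 vf wf hc hcard hf hwin ih =>
      intro hv hw
      refine .rule3 B t 𝒲 vf wf ?_ hcard
        (fun 𝒮 h1 h2 => forceIn_transfer hv hw (hf 𝒮 h1 h2))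
        (fun 𝒮 h1 h2 => ih 𝒮 h1 h2 (Set.mem_insert_of_mem _ hv) (Set.mem_insert_of_mem _ hw))
      intro W hW
      obtain ⟨x, hx, rfl⟩ := hc W hW
      exact ⟨x, hx, whiteComp_transfer hv hw x⟩

end Transfer

lemma key_construction {H : SimpleGraph V} {B B' : Set V} (hs : B ⊆ B')
    (𝒲 : Finset (Set V)) (hcomp : ∀ W ∈ 𝒲, IsWhiteComp H B W)
    (vf wf : Finset (Set V) → V)
    (hforce : ∀ 𝒮 : Finset (Set V), 𝒮 ⊆ 𝒲 → 𝒮.Nonempty →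
        ForceIn H B (⋃₀ (𝒮 : Set (Set V))) (vf 𝒮) (wf 𝒮))
    (hex : ∀ 𝒮 : Finset (Set V), 𝒮 ⊆ 𝒲 → 𝒮.Nonempty → wf 𝒮 ∉ B') :
    ∀ 𝒯 : Finset (Set V), 𝒯 ⊆ 𝒲 →
      ∃ (𝒞 : Finset (Set V)) (tl : Set V → Finset (Set V)),
        𝒞.card = 𝒯.card ∧
        (∀ C ∈ 𝒞, IsWhiteComp H B' C) ∧
        (∀ C ∈ 𝒞, tl C ⊆ 𝒯 ∧ (tl C).Nonempty ∧ wf (tl C) ∈ C ∧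
          C ⊆ ⋃₀ ((tl C : Set (Set V)))) ∧
        (∀ C ∈ 𝒞, ∀ C' ∈ 𝒞, (tl C').card ≤ (tl C).card → tl C' ⊆ tl C) := by
  intro 𝒯
  induction 𝒯 using Finset.strongInduction with
  | _ 𝒯 IH =>
    intro h𝒯
    rcases 𝒯.eq_empty_or_nonempty with rfl | hne
    · exact ⟨∅, fun _ => ∅, by simp, by simp, by simp, by simp⟩
    · classical
      obtain ⟨hvB, hwB, hwU, hadj, huniq⟩ := hforce 𝒯 h𝒯 hne
      obtain ⟨W₀, hW₀T', hwfW₀⟩ := hwU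
      have hW₀T : W₀ ∈ 𝒯 := hW₀T'
      set x := wf 𝒯 with hx
      set C₀ := WhiteComp H B' x with hC₀
      obtain ⟨w₀, hw₀B, hW₀eq⟩ := hcomp W₀ (h𝒯 hW₀T)
      have hxW₀ : W₀ = WhiteComp H B x := by
        rw [hW₀eq]
        exact (whiteComp_eq_of_mem (hW₀eq ▸ hwfW₀)).symm
      have hC₀W₀ : C₀ ⊆ W₀ := by
        rw [hxW₀]
        exact whiteComp_mono hs x
      obtain ⟨𝒞', tl', hcard', hcomp', hprop', hchain'⟩ :=
        IH (𝒯.erase W₀) (Finset.erase_ssubset hW₀T) ((Finset.erase_subset _ _).trans h𝒯)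
      have hdisj : ∀ y, y ∈ W₀ → y ∈ ⋃₀ ((𝒯.erase W₀ : Finset (Set V)) : Set (Set V)) → False := by
        intro y hy hy'
        obtain ⟨W', hW'', hyW'⟩ := hy'
        have hW'T : W' ∈ 𝒯.erase W₀ := hW''
        have hW'ne : W' ≠ W₀ := Finset.ne_of_mem_erase hW'T
        obtain ⟨w', hw'B, hW'eq⟩ := hcomp W' (h𝒯 (Finset.mem_of_mem_erase hW'T))
        have h1 : WhiteComp H B y = W' := by
          rw [hW'eq]
          exact whiteComp_eq_of_mem (hW'eq ▸ hyW')
        have h2 : WhiteComp H B y = W₀ := by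
          rw [hxW₀]
          exact whiteComp_eq_of_mem (hxW₀ ▸ hy)
        exact hW'ne (h1 ▸ h2 ▸ rfl)
      have hC₀notmem : C₀ ∉ 𝒞' := by
        intro hmem
        have hsub := (hprop' C₀ hmem).2.2.2
        have hxC₀ : x ∈ C₀ := mem_whiteComp_self H B' x
        have hx2 : x ∈ ⋃₀ ((tl' C₀ : Finset (Set V)) : Set (Set V)) := hsub hxC₀
        obtain ⟨W', hW', hxW'⟩ := hx2
        have : W' ∈ 𝒯.erase W₀ := (hprop' C₀ hmem).1 hW'
        exact hdisj x hwfW₀ ⟨W', this, hxW'⟩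
      refine ⟨insert C₀ 𝒞', fun C => if C = C₀ then 𝒯 else tl' C, ?_, ?_, ?_, ?_⟩
      · rw [Finset.card_insert_of_notMem hC₀notmem, hcard', Finset.card_erase_add_one hW₀T]
      · intro C hC
        rcases Finset.mem_insert.mp hC with rfl | hC'
        · exact ⟨x, hex 𝒯 h𝒯 hne, rfl⟩
        · exact hcomp' C hC'
      · intro C hC
        dsimp only
        rcases Finset.mem_insert.mp hC with rfl | hC'
        · rw [if_pos rfl]
          exact ⟨Finset.Subset.refl _, hne, mem_whiteComp_self H B' x,
            fun y hy => ⟨W₀, hW₀T', hC₀W₀ hy⟩⟩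
        · have hCne : C ≠ C₀ := fun h => hC₀notmem (h ▸ hC')
          rw [if_neg hCne]
          obtain ⟨p1, p2, p3, p4⟩ := hprop' C hC'
          exact ⟨p1.trans (Finset.erase_subset _ _), p2, p3, p4⟩
      · intro C hC C' hC' hle
        dsimp only at hle ⊢
        rcases Finset.mem_insert.mp hC with rfl | hCm
        · rcases Finset.mem_insert.mp hC' with rfl | hC'm
          · exact Finset.Subset.refl _
          · have hC'ne : C' ≠ C₀ := fun h => hC₀notmem (h ▸ hC'm)
            rw [if_pos rfl, if_neg hC'ne]
            exact ((hprop' C' hC'm).1).trans (Finset.erase_subset _ _)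
        · have hCne : C ≠ C₀ := fun h => hC₀notmem (h ▸ hCm)
          rcases Finset.mem_insert.mp hC' with rfl | hC'm
          · rw [if_pos rfl, if_neg hCne] at hle
            have h1 : (tl' C).card ≤ (𝒯.erase W₀).card :=
              Finset.card_le_card (hprop' C hCm).1
            have h2 : (𝒯.erase W₀).card + 1 = 𝒯.card := Finset.card_erase_add_one hW₀T
            exact absurd hle (by omega)
          · have hC'ne : C' ≠ C₀ := fun h => hC₀notmem (h ▸ hC'm)
            rw [if_neg hCne, if_neg hC'ne] at hle ⊢
            exact hchain' C hCm C' hC'm hle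

lemma Win.mono_blue {H : SimpleGraph V} {q t : ℕ} {B : Set V} (h : Win H q B t) :
    ∀ B', B ⊆ B' → Win H q B' t := by
  induction h with
  | all B t hall => exact fun B' hs => .all B' t (fun v => hs (hall v))
  | rule1 B t x hwin ih =>
      intro B' hs
      by_cases hx : x ∈ B'
      · exact (ih B' (Set.insert_subset hx hs)).mono_t (t + 1) (Nat.le_succ t)
      · exact .rule1 B' t x (ih _ (Set.insert_subset_insert hs))
  | rule2 B t a b hf hwin ih =>
      intro B' hs
      by_cases hb : b ∈ B'
      · exact ih B' (Set.insert_subset hb hs)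
      · obtain ⟨h1, h2, h3, h4, h5⟩ := hf
        refine .rule2 B' t a b ⟨hs h1, hb, Set.mem_univ _, h4,
          fun u hu hnB' _ => h5 u hu (fun hB => hnB' (hs hB)) (Set.mem_univ _)⟩
          (ih _ (Set.insert_subset_insert hs))
  | rule3 B t 𝒲 vf wf hcomp hcard hforce hwin ih =>
      intro B' hs
      by_cases hexi : ∃ 𝒮 : Finset (Set V), 𝒮 ⊆ 𝒲 ∧ 𝒮.Nonempty ∧ wf 𝒮 ∈ B'
      · obtain ⟨𝒮, h1, h2, h3⟩ := hexi
        exact ih 𝒮 h1 h2 B' (Set.insert_subset h3 hs)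
      · push_neg at hexi
        obtain ⟨𝒞, tl, hcard𝒞, hcomp𝒞, hprop, hchain⟩ :=
          key_construction hs 𝒲 hcomp vf wf hforce hexi 𝒲 (subset_refl _)
        classical
        set maxC : Finset (Set V) → Set V := fun 𝒮' =>
          if h : 𝒮'.Nonempty then
            (Finset.exists_max_image 𝒮' (fun C => (tl C).card) h).choose
          else ∅ with hmaxC
        have hmaxspec : ∀ (𝒮' : Finset (Set V)) (h2 : 𝒮'.Nonempty),
            maxC 𝒮' ∈ 𝒮' ∧ ∀ C' ∈ 𝒮', (tl C').card ≤ (tl (maxC 𝒮')).card := by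
          intro 𝒮' h2
          have heq : maxC 𝒮' = (Finset.exists_max_image 𝒮' (fun C => (tl C).card) h2).choose := by
            simp only [hmaxC, dif_pos h2]
          rw [heq]
          exact (Finset.exists_max_image 𝒮' (fun C => (tl C).card) h2).choose_spec
        refine .rule3 B' t 𝒞 (fun 𝒮' => vf (tl (maxC 𝒮'))) (fun 𝒮' => wf (tl (maxC 𝒮')))
          hcomp𝒞 (hcard𝒞 ▸ hcard) ?_ ?_
        · intro 𝒮' h1 h2
          obtain ⟨hCmem, hCmax⟩ := hmaxspec 𝒮' h2
          obtain ⟨hsub𝒲, hne𝒮, hwfmem, hCsub⟩ := hprop (maxC 𝒮') (h1 hCmem)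
          obtain ⟨hvB, hwB, hwU, hadj, huniq⟩ := hforce (tl (maxC 𝒮')) hsub𝒲 hne𝒮
          refine ⟨hs hvB, hexi (tl (maxC 𝒮')) hsub𝒲 hne𝒮, ⟨maxC 𝒮', hCmem, hwfmem⟩, hadj, ?_⟩
          intro u hu hnB' huU'
          obtain ⟨C', hC'mem', huC'⟩ := huU'
          have hC'mem : C' ∈ 𝒮' := hC'mem'
          have hC'𝒞 : C' ∈ 𝒞 := h1 hC'mem
          have htlsub : tl C' ⊆ tl (maxC 𝒮') :=
            hchain (maxC 𝒮') (h1 hCmem) C' hC'𝒞 (hCmax C' hC'mem)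
          have huS : u ∈ ⋃₀ ((tl (maxC 𝒮') : Finset (Set V)) : Set (Set V)) := by
            obtain ⟨W, hW, huW⟩ := (hprop C' hC'𝒞).2.2.2 huC'
            exact ⟨W, htlsub hW, huW⟩
          exact huniq u hu (fun hB => hnB' (hs hB)) huS
        · intro 𝒮' h1 h2
          obtain ⟨hCmem, hCmax⟩ := hmaxspec 𝒮' h2
          obtain ⟨hsub𝒲, hne𝒮, _, _⟩ := hprop (maxC 𝒮') (h1 hCmem)
          exact ih (tl (maxC 𝒮')) hsub𝒲 hne𝒮 _ (Set.insert_subset_insert hs)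

end ZqGame

open SimpleGraph

theorem Zq_le_Zq_deleteEdge_add_two_aux {V : Type*} (G : SimpleGraph V) (v w : V)
    (he : G.Adj v w) (q : ℕ) :
    ZqGame.Zq G q ≤ ZqGame.Zq (G.deleteEdges {s(v, w)}) q + 2 := by
  classical
  set G' := G.deleteEdges {s(v, w)} with hG'
  by_cases hnon : {t | ZqGame.Win G' q (∅ : Set V) t}.Nonempty
  · have ht₀ : ZqGame.Win G' q ∅ (ZqGame.Zq G' q) := by
      have := Nat.sInf_mem hnon
      simpa [ZqGame.Zq, ZqGame.cost] using this
    have h1 : ZqGame.Win G' q (insert w (insert v (∅ : Set V))) (ZqGame.Zq G' q) :=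
      ht₀.mono_blue _ (Set.empty_subset _)
    have h2 : ZqGame.Win G q (insert w (insert v (∅ : Set V))) (ZqGame.Zq G' q) :=
      ZqGame.win_transfer h1 (by simp) (by simp)
    have h3 : ZqGame.Win G q (∅ : Set V) (ZqGame.Zq G' q + 2) :=
      .rule1 _ _ v (.rule1 _ _ w h2)
    have h4 : ZqGame.Zq G q ≤ ZqGame.Zq G' q + 2 := Nat.sInf_le h3
    exact h4
  · have hGempty : {t | ZqGame.Win G q (∅ : Set V) t} = ∅ := by
      ext t
      simp only [Set.mem_setOf_eq, Set.mem_empty_iff_false, iff_false]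
      intro hwin
      have hfin : (Set.univ : Set V).Finite := by
        simpa using hwin.compl_finite
      exact hnon ⟨hfin.toFinset.card,
        ZqGame.win_all_of_cover hfin.toFinset ∅ (fun x _ => by simp)⟩
    have hz : ZqGame.Zq G q = 0 := by
      simp [ZqGame.Zq, ZqGame.cost, hGempty]
    omega

/-- Edge deletion can decrease `Z_q` by at most `2`:
for any edge `vw` of `G`, `Z_q(G) ≤ Z_q(G - vw) + 2`. -/
theorem Zq_le_Zq_deleteEdge_add_two {V : Type*} (G : SimpleGraph V) (v w : V)
    (he : G.Adj v w) (q : ℕ) :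
    ZqGame.Zq G q ≤ ZqGame.Zq (G.deleteEdges {s(v, w)}) q + 2 := by
  exact Zq_le_Zq_deleteEdge_add_two_aux G v w he q
end

section
/- Let $G = \bigcup_{i=1}^k S_{n_i}$ be a disjoint union of $k$ stars with $n_1 \ge n_2 \ge \cdots \ge n_k$ vertices. If $q < k$ then $\operatorname{Z}_q(G) = k - q + \sum_{i=1}^{q} \operatorname{Z}(S_{n_i})$, and if $q \ge k$ then $\operatorname{Z}_q(G) = \sum_{i=1}^{k} \operatorname{Z}(S_{n_i})$, where $\operatorname{Z}(S_m) = \max\{1, m-2\}$ is the standard zero forcing number of the star on $m$ vertices. -/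
open SimpleGraph

namespace ZqGame

variable {V : Type*}

/-- The set of vertices eventually colored blue by exhaustively applying the standard
zero forcing color change rule starting from `B`. -/
inductive ZFDeriv (G : SimpleGraph V) (B : Set V) : V → Prop
  | base (v : V) : v ∈ B → ZFDeriv G B v
  | force (v w : V) : ZFDeriv G B v → G.Adj v w →
      (∀ u, G.Adj v u → u ≠ w → ZFDeriv G B u) → ZFDeriv G B w

/-- `B` is a zero forcing set of `G`. -/
def IsZFSet (G : SimpleGraph V) (B : Set V) : Prop := ∀ v, ZFDeriv G B v

/-- The standard zero forcing number `Z(G)`. -/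
noncomputable def Z (G : SimpleGraph V) [Fintype V] [DecidableEq V] : ℕ :=
  sInf {m | ∃ B : Finset V, B.card = m ∧ IsZFSet G ↑B}

end ZqGame

namespace ZqGame

/-- The star graph on `m` vertices: vertex `0` is the center, adjacent to all others. -/
def starGraph (m : ℕ) : SimpleGraph (Fin m) :=
  SimpleGraph.fromRel (fun a _ => (a : ℕ) = 0)

/-- A disjoint union of `k` stars, the `i`-th on `n i` vertices (with center `⟨i, 0⟩`). -/
def starForest (k : ℕ) (n : ℕ → ℕ) : SimpleGraph (Σ i : Fin k, Fin (n i)) :=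
  SimpleGraph.fromRel (fun a b => a.1 = b.1 ∧ (a.2 : ℕ) = 0)

end ZqGame

namespace ZqStarProof
open ZqGame Finset

variable {k : ℕ} {n : ℕ → ℕ}

/-- vertex type of the star forest -/
abbrev FV (k : ℕ) (n : ℕ → ℕ) := Σ i : Fin k, Fin (n i)

noncomputable local instance (B : Set (FV k n)) : DecidablePred (· ∈ B) :=
  fun _ => Classical.propDecidable _

/-- sum of the `m` largest entries of `v`. -/
noncomputable def topq {k : ℕ} (m : ℕ) (v : Fin k → ℕ) : ℕ :=
  ((Finset.univ : Finset (Fin k)).powersetCard m).sup fun s => ∑ i ∈ s, v i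

lemma le_topq {m : ℕ} (v : Fin k → ℕ) {s : Finset (Fin k)} (hs : s.card = m) :
    ∑ i ∈ s, v i ≤ topq m v :=
  Finset.le_sup (f := fun s => ∑ i ∈ s, v i)
    (Finset.mem_powersetCard.2 ⟨Finset.subset_univ s, hs⟩)

lemma topq_mono {m : ℕ} {v w : Fin k → ℕ} (h : ∀ i, v i ≤ w i) : topq m v ≤ topq m w := by
  refine Finset.sup_le fun s hs => le_trans (Finset.sum_le_sum fun i _ => h i) ?_
  exact Finset.le_sup (f := fun s => ∑ i ∈ s, w i) hs

lemma topq_exists {m : ℕ} (hm : m ≤ k) (v : Fin k → ℕ) :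
    ∃ s : Finset (Fin k), s.card = m ∧ topq m v = ∑ i ∈ s, v i := by
  have hne : ((Finset.univ : Finset (Fin k)).powersetCard m).Nonempty := by
    obtain ⟨t, -, ht⟩ := Finset.exists_superset_card_eq (s := (∅ : Finset (Fin k)))
      (by simp) (by simpa using hm)
    exact ⟨t, by simp [Finset.mem_powersetCard, ht]⟩
  obtain ⟨s, hs, h⟩ := Finset.exists_mem_eq_sup _ hne fun s => ∑ i ∈ s, v i
  exact ⟨s, (Finset.mem_powersetCard.1 hs).2, h⟩

lemma topq_le_of_support {m : ℕ} {v : Fin k → ℕ} {s : Finset (Fin k)}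
    (h : ∀ j ∉ s, v j = 0) : topq m v ≤ ∑ i ∈ s, v i := by
  refine Finset.sup_le fun s' _ => ?_
  calc ∑ i ∈ s', v i = ∑ i ∈ s' ∩ s, v i := by
        refine (Finset.sum_subset Finset.inter_subset_left fun x hx hx' => ?_).symm
        exact h x fun hxs => hx' (Finset.mem_inter.2 ⟨hx, hxs⟩)
    _ ≤ ∑ i ∈ s, v i := Finset.sum_le_sum_of_subset Finset.inter_subset_right

lemma topq_lipschitz {m : ℕ} (hm : m ≤ k) {v w : Fin k → ℕ} (i : Fin k)
    (hoff : ∀ j, j ≠ i → v j ≤ w j) (hi : v i ≤ w i + 1) :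
    topq m v ≤ topq m w + 1 := by
  obtain ⟨s, hcard, hs⟩ := topq_exists hm v
  rw [hs]
  have : ∑ j ∈ s, v j ≤ (∑ j ∈ s, w j) + 1 := by
    by_cases hmem : i ∈ s
    · rw [← Finset.sum_erase_add _ _ hmem, ← Finset.sum_erase_add _ _ hmem]
      have h1 : ∑ j ∈ s.erase i, v j ≤ ∑ j ∈ s.erase i, w j :=
        Finset.sum_le_sum fun j hj => hoff j (Finset.ne_of_mem_erase hj)
      omega
    · refine le_trans (Finset.sum_le_sum fun j hj => hoff j ?_) (by omega)
      exact fun h => hmem (h ▸ hj)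
  exact le_trans this (by simpa using Nat.add_le_add_right (le_topq w hcard) 1)

lemma topq_swap {m : ℕ} {v w : Fin k → ℕ} (i : Fin k) (s₀ : Finset (Fin k))
    (hoff : ∀ j, j ≠ i → v j ≤ w j) (hi : i ∉ s₀) (hcard : m ≤ s₀.card)
    (hbig : ∀ j ∈ s₀, v i ≤ w j) : topq m v ≤ topq m w := by
  have hm : m ≤ k := le_trans hcard (by simpa using Finset.card_le_univ s₀)
  obtain ⟨s, hscard, hs⟩ := topq_exists hm v
  rw [hs]
  by_cases hmem : i ∈ s
  · have hm1 : 1 ≤ m := hscard ▸ Finset.card_pos.2 ⟨i, hmem⟩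
    have hex : ∃ j₀ ∈ s₀, j₀ ∉ s := by
      by_contra h
      push_neg at h
      have hsub : s₀ ⊆ s.erase i := fun x hx =>
        Finset.mem_erase.2 ⟨fun he => hi (he ▸ hx), h x hx⟩
      have := Finset.card_le_card hsub
      rw [Finset.card_erase_of_mem hmem, hscard] at this
      omega
    obtain ⟨j₀, hj₀s₀, hj₀s⟩ := hex
    have hj₀i : j₀ ≠ i := fun h => hi (h ▸ hj₀s₀)
    have hj₀e : j₀ ∉ s.erase i := fun h => hj₀s (Finset.mem_of_mem_erase h)
    have hcard' : (insert j₀ (s.erase i)).card = m := by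
      rw [Finset.card_insert_of_notMem hj₀e, Finset.card_erase_of_mem hmem, hscard]
      omega
    refine le_trans ?_ (le_topq w hcard')
    rw [Finset.sum_insert hj₀e, ← Finset.sum_erase_add _ _ hmem]
    have h1 : ∑ j ∈ s.erase i, v j ≤ ∑ j ∈ s.erase i, w j :=
      Finset.sum_le_sum fun j hj => hoff j (Finset.ne_of_mem_erase hj)
    have h2 : v i ≤ w j₀ := hbig j₀ hj₀s₀
    omega
  · refine le_trans ?_ (le_topq w hscard)
    exact Finset.sum_le_sum fun j hj => hoff j (fun h => hmem (h ▸ hj))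

lemma sum_le_sum_front {v : Fin k → ℕ} (hv : ∀ i j : Fin k, i ≤ j → v j ≤ v i) :
    ∀ (m : ℕ) (hm : m ≤ k) (s : Finset (Fin k)), s.card = m →
      ∑ i ∈ s, v i ≤ ∑ j : Fin m, v (Fin.castLE hm j) := by
  intro m
  induction m with
  | zero => intro hm s hs; simp [Finset.card_eq_zero.1 hs]
  | succ m ih =>
    intro hm s hs
    have hne : s.Nonempty := Finset.card_pos.1 (by omega)
    set y := s.max' hne with hy
    have hymem : y ∈ s := s.max'_mem hne
    have hble : ∀ x ∈ s, x ≤ y := fun x hx => s.le_max' x hx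
    have hcard_le : s.card ≤ (y : ℕ) + 1 := by
      have : s ⊆ Finset.Iic y := fun x hx => Finset.mem_Iic.2 (hble x hx)
      simpa [Fin.card_Iic] using Finset.card_le_card this
    have hmy : m ≤ (y : ℕ) := by omega
    have herase : (s.erase y).card = m := by
      rw [Finset.card_erase_of_mem hymem, hs]
      omega
    have hmk : m ≤ k := by omega
    have IH := ih hmk (s.erase y) herase
    rw [← Finset.sum_erase_add _ _ hymem, Fin.sum_univ_castSucc]
    have hcast : ∀ j : Fin m, Fin.castLE hmk j = Fin.castLE hm j.castSucc := by
      intro j; ext; simp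
    have hlast : v y ≤ v (Fin.castLE hm (Fin.last m)) := by
      apply hv
      simp [Fin.le_def, hmy]
    calc ∑ i ∈ s.erase y, v i + v y
        ≤ (∑ j : Fin m, v (Fin.castLE hm j.castSucc)) + v (Fin.castLE hm (Fin.last m)) := by
          refine Nat.add_le_add ?_ hlast
          refine le_trans IH (le_of_eq ?_)
          exact Finset.sum_congr rfl fun j _ => by rw [hcast]
      _ = _ := rfl

lemma topq_antitone (m : ℕ) (hm : m ≤ k) {v : Fin k → ℕ}
    (hv : ∀ i j : Fin k, i ≤ j → v j ≤ v i) :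
    topq m v = ∑ j : Fin m, v (Fin.castLE hm j) := by
  apply le_antisymm
  · refine Finset.sup_le fun s hs => ?_
    exact sum_le_sum_front hv m hm s (Finset.mem_powersetCard.1 hs).2
  · have hcard : ((Finset.univ : Finset (Fin m)).map (Fin.castLEEmb hm)).card = m := by
      simp
    refine le_trans (le_of_eq ?_) (le_topq v hcard)
    rw [Finset.sum_map]
    rfl

lemma adj_iff {x y : FV k n} :
    (starForest k n).Adj x y ↔ x ≠ y ∧ x.1 = y.1 ∧ ((x.2 : ℕ) = 0 ∨ (y.2 : ℕ) = 0) := by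
  rw [starForest, SimpleGraph.fromRel_adj]
  constructor
  · rintro ⟨hne, (⟨h1, h2⟩ | ⟨h1, h2⟩)⟩
    · exact ⟨hne, h1, Or.inl h2⟩
    · exact ⟨hne, h1.symm, Or.inr h2⟩
  · rintro ⟨hne, h1, (h2 | h2)⟩
    · exact ⟨hne, Or.inl ⟨h1, h2⟩⟩
    · exact ⟨hne, Or.inr ⟨h1.symm, h2⟩⟩

lemma adj_fst {x y : FV k n} (h : (starForest k n).Adj x y) : x.1 = y.1 :=
  (adj_iff.1 h).2.1

lemma mk_eq_mk {i : Fin k} {a b : Fin (n i)} :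
    (⟨i, a⟩ : FV k n) = ⟨i, b⟩ ↔ a = b := by
  constructor
  · intro h
    exact eq_of_heq (Sigma.mk.inj_iff.1 h).2
  · rintro rfl; rfl

lemma mk_fst_eq {i i' : Fin k} {a : Fin (n i)} {b : Fin (n i')}
    (h : (⟨i, a⟩ : FV k n) = ⟨i', b⟩) : i = i' := congrArg Sigma.fst h

section WithHn
variable (hn : ∀ i, 1 ≤ n i)

/-- the center of star `i` -/
def ctr (i : Fin k) : FV k n := ⟨i, ⟨0, hn i⟩⟩

lemma adj_ctr_leaf {i : Fin k} {j : Fin (n i)} (hj : (j : ℕ) ≠ 0) :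
    (starForest k n).Adj (ctr hn i) ⟨i, j⟩ := by
  rw [adj_iff]
  refine ⟨?_, rfl, Or.inl rfl⟩
  intro h
  exact hj ((Fin.val_eq_val _ _).2 (mk_eq_mk.1 h).symm)

lemma eq_ctr_of_adj_leaf {i : Fin k} {j : Fin (n i)} {v : FV k n}
    (hj : (j : ℕ) ≠ 0) (h : (starForest k n).Adj v ⟨i, j⟩) : v = ctr hn i := by
  obtain ⟨hne, h1, h2⟩ := adj_iff.1 h
  obtain ⟨iv, jv⟩ := v
  cases h1
  rcases h2 with h2 | h2
  · simp only [ctr, mk_eq_mk]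
    exact Fin.ext h2
  · exact absurd h2 hj

end WithHn

/-- number of white leaves of star `i` -/
noncomputable def wcount (B : Set (FV k n)) (i : Fin k) : ℕ :=
  (Finset.univ.filter fun j : Fin (n i) => (j : ℕ) ≠ 0 ∧ (⟨i, j⟩ : FV k n) ∉ B).card

/-- star `i` is entirely white -/
def allW (B : Set (FV k n)) (i : Fin k) : Prop :=
  ∀ j : Fin (n i), (⟨i, j⟩ : FV k n) ∉ B

open Classical in
noncomputable def dlt (B : Set (FV k n)) (i : Fin k) : ℕ :=
  if allW B i then n i - 3 else wcount B i - 1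

open Classical in
noncomputable def rho (B : Set (FV k n)) (i : Fin k) : ℕ :=
  if allW B i then 1 else 0

noncomputable def phi (q : ℕ) (B : Set (FV k n)) : ℕ :=
  (∑ i, rho B i) + topq (min q k) (dlt B)

lemma mk_ne_of_fst_ne {x y : FV k n} (h : x.1 ≠ y.1) : x ≠ y :=
  fun he => h (congrArg Sigma.fst he)

lemma wcount_insert_of_fst_ne {B : Set (FV k n)} {x : FV k n} {i : Fin k} (h : x.1 ≠ i) :
    wcount (insert x B) i = wcount B i := by
  unfold wcount
  congr 1
  apply Finset.filter_congr
  intro j _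
  have hne : (⟨i, j⟩ : FV k n) ≠ x := mk_ne_of_fst_ne (by simpa using h.symm)
  simp [Set.mem_insert_iff, hne]

lemma allW_insert_of_fst_ne {B : Set (FV k n)} {x : FV k n} {i : Fin k} (h : x.1 ≠ i) :
    allW (insert x B) i ↔ allW B i := by
  unfold allW
  constructor
  · intro ha j hj; exact ha j (Set.mem_insert_of_mem _ hj)
  · intro ha j hj
    rcases Set.mem_insert_iff.1 hj with he | hm
    · exact mk_ne_of_fst_ne (x := (⟨i, j⟩ : FV k n)) (by simpa using h.symm) he
    · exact ha j hm

lemma not_allW_insert_mk {B : Set (FV k n)} {i : Fin k} (a : Fin (n i)) :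
    ¬ allW (insert (⟨i, a⟩ : FV k n) B) i :=
  fun h => h a (Set.mem_insert _ _)

lemma not_allW_of_mem {B : Set (FV k n)} {i : Fin k} {a : Fin (n i)}
    (h : (⟨i, a⟩ : FV k n) ∈ B) : ¬ allW B i := fun ha => ha a h

lemma not_allW_insert {B : Set (FV k n)} {x : FV k n} {i : Fin k} (h : ¬ allW B i) :
    ¬ allW (insert x B) i :=
  fun ha => h fun j hj => ha j (Set.mem_insert_of_mem _ hj)

lemma wcount_filter_insert_mk (B : Set (FV k n)) {i : Fin k} (a : Fin (n i)) :
    (Finset.univ.filter fun j : Fin (n i) =>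
        (j : ℕ) ≠ 0 ∧ (⟨i, j⟩ : FV k n) ∉ insert (⟨i, a⟩ : FV k n) B)
      = (Finset.univ.filter fun j : Fin (n i) =>
        (j : ℕ) ≠ 0 ∧ (⟨i, j⟩ : FV k n) ∉ B).erase a := by
  ext j
  simp only [Finset.mem_erase, Finset.mem_filter, Finset.mem_univ, true_and,
    Set.mem_insert_iff, not_or, mk_eq_mk]
  tauto

lemma wcount_insert_mk_le (B : Set (FV k n)) {i : Fin k} (a : Fin (n i)) :
    wcount (insert (⟨i, a⟩ : FV k n) B) i ≤ wcount B i := by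
  unfold wcount
  rw [wcount_filter_insert_mk]
  exact Finset.card_erase_le

lemma le_wcount_insert_mk (B : Set (FV k n)) {i : Fin k} (a : Fin (n i)) :
    wcount B i ≤ wcount (insert (⟨i, a⟩ : FV k n) B) i + 1 := by
  unfold wcount
  rw [wcount_filter_insert_mk]
  have := Finset.pred_card_le_card_erase (s :=
    (Finset.univ.filter fun j : Fin (n i) => (j : ℕ) ≠ 0 ∧ (⟨i, j⟩ : FV k n) ∉ B)) (a := a)
  omega

lemma wcount_pos_of_white_leaf {B : Set (FV k n)} {i : Fin k} {a : Fin (n i)}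
    (ha : (a : ℕ) ≠ 0) (haB : (⟨i, a⟩ : FV k n) ∉ B) : 1 ≤ wcount B i := by
  apply Finset.card_pos.2
  exact ⟨a, by simp [ha, haB]⟩

lemma wcount_insert_mk_eq (B : Set (FV k n)) {i : Fin k} {a : Fin (n i)}
    (ha : (a : ℕ) ≠ 0) (haB : (⟨i, a⟩ : FV k n) ∉ B) :
    wcount (insert (⟨i, a⟩ : FV k n) B) i = wcount B i - 1 := by
  have hmem : a ∈ (Finset.univ.filter fun j : Fin (n i) =>
      (j : ℕ) ≠ 0 ∧ (⟨i, j⟩ : FV k n) ∉ B) := by simp [ha, haB]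
  unfold wcount
  rw [wcount_filter_insert_mk, Finset.card_erase_of_mem hmem]

lemma wcount_insert_center (B : Set (FV k n)) {i : Fin k} {a : Fin (n i)}
    (ha : (a : ℕ) = 0) : wcount (insert (⟨i, a⟩ : FV k n) B) i = wcount B i := by
  unfold wcount
  congr 1
  apply Finset.filter_congr
  intro j _
  by_cases hj : (j : ℕ) = 0
  · simp [hj]
  · have hne : (⟨i, j⟩ : FV k n) ≠ ⟨i, a⟩ := by
      rw [Ne, mk_eq_mk]
      intro he
      exact hj (by rw [he, ha])
    simp [Set.mem_insert_iff, hne]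

lemma wcount_allW (hn : ∀ i, 1 ≤ n i) {B : Set (FV k n)} {i : Fin k} (h : allW B i) :
    wcount B i = n i - 1 := by
  unfold wcount
  have he : (Finset.univ.filter fun j : Fin (n i) => (j : ℕ) ≠ 0 ∧ (⟨i, j⟩ : FV k n) ∉ B)
      = Finset.univ.erase ⟨0, hn i⟩ := by
    ext j
    simp only [Finset.mem_filter, Finset.mem_univ, true_and, Finset.mem_erase, and_true]
    constructor
    · rintro ⟨hj, -⟩
      exact fun h0 => hj (by rw [h0])
    · intro hj
      exact ⟨fun h0 => hj (Fin.ext h0), h j⟩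
  rw [he, Finset.card_erase_of_mem (Finset.mem_univ _), Finset.card_univ, Fintype.card_fin]

lemma wcount_eq_zero_iff {B : Set (FV k n)} {i : Fin k} :
    wcount B i = 0 ↔ ∀ j : Fin (n i), (j : ℕ) ≠ 0 → (⟨i, j⟩ : FV k n) ∈ B := by
  unfold wcount
  rw [Finset.card_eq_zero, Finset.filter_eq_empty_iff]
  constructor
  · intro h j hj
    by_contra hb
    exact h (Finset.mem_univ j) ⟨hj, hb⟩
  · rintro h j - hc
    exact hc.2 (h j hc.1)



lemma rho_insert_of_fst_ne {B : Set (FV k n)} {x : FV k n} {i : Fin k} (h : x.1 ≠ i) :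
    rho (insert x B) i = rho B i := by
  unfold rho
  by_cases hA : allW B i
  · rw [if_pos ((allW_insert_of_fst_ne h).2 hA), if_pos hA]
  · rw [if_neg (fun c => hA ((allW_insert_of_fst_ne h).1 c)), if_neg hA]

lemma dlt_insert_of_fst_ne {B : Set (FV k n)} {x : FV k n} {i : Fin k} (h : x.1 ≠ i) :
    dlt (insert x B) i = dlt B i := by
  unfold dlt
  by_cases hA : allW B i
  · rw [if_pos ((allW_insert_of_fst_ne h).2 hA), if_pos hA]
  · rw [if_neg (fun c => hA ((allW_insert_of_fst_ne h).1 c)), if_neg hA,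
      wcount_insert_of_fst_ne h]

lemma min_le_right' (q : ℕ) : min q k ≤ k := min_le_right _ _

lemma phi_insert_le (hn : ∀ i, 1 ≤ n i) (q : ℕ) (B : Set (FV k n)) (x : FV k n) :
    phi q B ≤ phi q (insert x B) + 1 := by
  obtain ⟨i, a⟩ := x
  set B' := insert (⟨i, a⟩ : FV k n) B with hB'
  have hoffr : ∀ j, j ≠ i → rho B' j = rho B j :=
    fun j hj => rho_insert_of_fst_ne (by simpa using hj.symm)
  have hoffd : ∀ j, j ≠ i → dlt B' j = dlt B j :=
    fun j hj => dlt_insert_of_fst_ne (by simpa using hj.symm)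
  have hsum : ∀ (f g : Fin k → ℕ), (∀ j, j ≠ i → f j = g j) →
      ∑ j, f j = f i + ∑ j ∈ Finset.univ.erase i, g j := by
    intro f g hfg
    rw [← Finset.add_sum_erase _ f (Finset.mem_univ i)]
    congr 1
    exact Finset.sum_congr rfl fun j hj => hfg j (Finset.ne_of_mem_erase hj)
  by_cases hA : allW B i
  · -- star i was all white: rho drops by one, dlt does not drop
    have hrB : rho B i = 1 := if_pos hA
    have hrB' : rho B' i = 0 := if_neg (not_allW_insert_mk a)
    have hd : ∀ j, dlt B j ≤ dlt B' j := by
      intro j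
      by_cases hj : j = i
      · subst hj
        have h1 : dlt B j = n j - 3 := if_pos hA
        have h2 : dlt B' j = wcount B' j - 1 := if_neg (not_allW_insert_mk a)
        have h3 : wcount B j = n j - 1 := wcount_allW hn hA
        have h4 : wcount B j ≤ wcount B' j + 1 := le_wcount_insert_mk B a
        have h5 : 1 ≤ n (j : ℕ) := hn j
        omega
      · rw [hoffd j hj]
    have hs1 : ∑ j, rho B j = 1 + ∑ j ∈ Finset.univ.erase i, rho B j := by
      rw [← Finset.add_sum_erase _ (rho B) (Finset.mem_univ i), hrB]
    have hs2 : ∑ j, rho B' j = 0 + ∑ j ∈ Finset.univ.erase i, rho B j := by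
      rw [← Finset.add_sum_erase _ (rho B') (Finset.mem_univ i), hrB']
      congr 1
      exact Finset.sum_congr rfl fun j hj => hoffr j (Finset.ne_of_mem_erase hj)
    have ht : topq (min q k) (dlt B) ≤ topq (min q k) (dlt B') := topq_mono hd
    unfold phi
    omega
  · have hrB : rho B i = 0 := if_neg hA
    have hrB' : rho B' i = 0 := if_neg (not_allW_insert hA)
    have hs2 : ∑ j, rho B' j = ∑ j, rho B j := by
      refine Finset.sum_congr rfl fun j _ => ?_
      by_cases hj : j = i
      · subst hj; rw [hrB, hrB']
      · exact hoffr j hj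
    have hdoff : ∀ j, j ≠ i → dlt B j ≤ dlt B' j := fun j hj => (hoffd j hj).symm.le
    have hdi : dlt B i ≤ dlt B' i + 1 := by
      have h1 : dlt B i = wcount B i - 1 := if_neg hA
      have h2 : dlt B' i = wcount B' i - 1 := if_neg (not_allW_insert hA)
      have h4 : wcount B i ≤ wcount B' i + 1 := le_wcount_insert_mk B a
      omega
    have ht : topq (min q k) (dlt B) ≤ topq (min q k) (dlt B') + 1 :=
      topq_lipschitz (min_le_right _ _) i hdoff hdi
    unfold phi
    omega

lemma phi_force_le (hn : ∀ i, 1 ≤ n i) (q : ℕ) {B : Set (FV k n)} {v w : FV k n}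
    (h : Force (starForest k n) B v w) : phi q B ≤ phi q (insert w B) := by
  obtain ⟨hv, hw, -, hadj, huniq⟩ := h
  obtain ⟨i, b⟩ := w
  obtain ⟨iv, jv⟩ := v
  have hfst : iv = i := adj_fst hadj
  subst hfst
  set B' := insert (⟨iv, b⟩ : FV k n) B with hB'
  have hnA : ¬ allW B iv := not_allW_of_mem hv
  have hnA' : ¬ allW B' iv := not_allW_insert hnA
  -- in every case wcount is preserved "in the delta sense"
  have hkey : dlt B' iv = dlt B iv := by
    rw [dlt, dlt, if_neg hnA, if_neg hnA']
    by_cases hb : (b : ℕ) = 0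
    · rw [wcount_insert_center _ hb]
    · -- w is a leaf, so v is the center and w is its unique white leaf
      have hvc : (⟨iv, jv⟩ : FV k n) = ctr hn iv := eq_ctr_of_adj_leaf hn hb hadj
      have hw1 : wcount B iv = 1 := by
        apply le_antisymm
        · by_contra hgt
          push_neg at hgt
          have h2 : 2 ≤ wcount B iv := hgt
          obtain ⟨j₁, hj₁, j₂, hj₂, hne⟩ := Finset.one_lt_card.1 h2
          simp only [Finset.mem_filter, Finset.mem_univ, true_and] at hj₁ hj₂
          have e₁ : (⟨iv, j₁⟩ : FV k n) = ⟨iv, b⟩ := by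
            apply huniq
            · rw [hvc]; exact adj_ctr_leaf hn hj₁.1
            · exact hj₁.2
            · trivial
          have e₂ : (⟨iv, j₂⟩ : FV k n) = ⟨iv, b⟩ := by
            apply huniq
            · rw [hvc]; exact adj_ctr_leaf hn hj₂.1
            · exact hj₂.2
            · trivial
          exact hne (mk_eq_mk.1 (e₁.trans e₂.symm))
        · exact wcount_pos_of_white_leaf hb hw
      have hw0 : wcount B' iv = 0 := by
        rw [wcount_insert_mk_eq B hb hw, hw1]
      rw [hw0, hw1]
  have heqd : dlt B' = dlt B := by
    funext j
    by_cases hj : j = iv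
    · subst hj; exact hkey
    · exact dlt_insert_of_fst_ne (by simpa using fun c => hj c.symm)
  have heqr : ∀ j, rho B' j = rho B j := by
    intro j
    by_cases hj : j = iv
    · subst hj; rw [rho, rho, if_neg hnA, if_neg hnA']
    · exact rho_insert_of_fst_ne (by simpa using fun c => hj c.symm)
  unfold phi
  rw [heqd, Finset.sum_congr rfl fun j _ => heqr j]

section Helpers
variable (hn : ∀ i, 1 ≤ n i)

lemma not_allW_of_mem' {B : Set (FV k n)} {x : FV k n} {i : Fin k}
    (hx : x ∈ B) (hf : x.1 = i) : ¬ allW B i := by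
  obtain ⟨ix, jx⟩ := x
  cases hf
  exact not_allW_of_mem hx

lemma eq_ctr' {x : FV k n} {i : Fin k} (h1 : x.1 = i) (h2 : (x.2 : ℕ) = 0) :
    x = ctr hn i := by
  obtain ⟨ix, jx⟩ := x
  cases h1
  simp only [ctr, mk_eq_mk]
  exact Fin.ext h2

lemma eq_ctr_of_adj_leaf' {x v : FV k n} {i : Fin k} (h1 : x.1 = i)
    (h2 : (x.2 : ℕ) ≠ 0) (h : (starForest k n).Adj v x) : v = ctr hn i := by
  obtain ⟨ix, jx⟩ := x
  cases h1
  exact eq_ctr_of_adj_leaf hn h2 h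

lemma adj_ctr_leaf' {x : FV k n} {i : Fin k} (h1 : x.1 = i) (h2 : (x.2 : ℕ) ≠ 0) :
    (starForest k n).Adj (ctr hn i) x := by
  obtain ⟨ix, jx⟩ := x
  cases h1
  exact adj_ctr_leaf hn h2

end Helpers

section Comp
variable {B : Set (FV k n)}

/-- the relation underlying white components -/
abbrev wrel (B : Set (FV k n)) (a b : FV k n) : Prop :=
  (starForest k n).Adj a b ∧ a ∉ B ∧ b ∉ B

lemma wrel_symm : Symmetric (wrel B) := fun _ _ ⟨h1, h2, h3⟩ => ⟨h1.symm, h3, h2⟩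

lemma mem_whiteComp_self (w : FV k n) : w ∈ WhiteComp (starForest k n) B w :=
  Relation.ReflTransGen.refl

lemma whiteComp_fst {w x : FV k n} (h : x ∈ WhiteComp (starForest k n) B w) :
    w.1 = x.1 := by
  simp only [WhiteComp, Set.mem_setOf_eq] at h
  induction h with
  | refl => rfl
  | tail h₁ h₂ ih => exact ih.trans (adj_fst h₂.1)

lemma whiteComp_white {w x : FV k n} (hw : w ∉ B)
    (h : x ∈ WhiteComp (starForest k n) B w) : x ∉ B := by
  simp only [WhiteComp, Set.mem_setOf_eq] at h
  induction h with
  | refl => exact hw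
  | tail h₁ h₂ ih => exact h₂.2.2

lemma whiteComp_eq_of_mem {w y : FV k n}
    (h : y ∈ WhiteComp (starForest k n) B w) :
    WhiteComp (starForest k n) B y = WhiteComp (starForest k n) B w := by
  have h' : Relation.ReflTransGen (wrel B) w y := h
  have h'' : Relation.ReflTransGen (wrel B) y w :=
    by haveI : Std.Symm (wrel B) := ⟨fun _ _ h => wrel_symm h⟩; exact Relation.ReflTransGen.symmetric.symm _ _ h'
  ext x
  constructor
  · intro hx
    exact Relation.ReflTransGen.trans h' hx
  · intro hx
    exact Relation.ReflTransGen.trans h'' hx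

variable (hn : ∀ i, 1 ≤ n i)

lemma reaches_ctr {i : Fin k} (hc : ctr hn i ∉ B) {x : FV k n}
    (hx : x ∉ B) (hxi : x.1 = i) : Relation.ReflTransGen (wrel B) x (ctr hn i) := by
  obtain ⟨ix, jx⟩ := x
  cases hxi
  by_cases hj : (jx : ℕ) = 0
  · have he : (⟨ix, jx⟩ : FV k n) = ctr hn ix := by
      simp only [ctr, mk_eq_mk]
      exact Fin.ext hj
    show Relation.ReflTransGen (wrel B) (⟨ix, jx⟩ : FV k n) (ctr hn ix)
    rw [he]
  · exact Relation.ReflTransGen.single ⟨(adj_ctr_leaf hn hj).symm, hx, hc⟩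

lemma mem_whiteComp_of_star {i : Fin k} (hc : ctr hn i ∉ B) {x y : FV k n}
    (hx : x ∉ B) (hy : y ∉ B) (hxi : x.1 = i) (hyi : y.1 = i) :
    y ∈ WhiteComp (starForest k n) B x := by
  have h1 := reaches_ctr hn hc hx hxi
  have h2 : Relation.ReflTransGen (wrel B) (ctr hn i) y := by haveI : Std.Symm (wrel B) := ⟨fun _ _ h => wrel_symm h⟩; exact Relation.ReflTransGen.symmetric.symm _ _ (reaches_ctr hn hc hy hyi)
  exact Relation.ReflTransGen.trans h1 h2

end Comp

lemma phi_rule3 (hn : ∀ i, 1 ≤ n i) (q : ℕ) (B : Set (FV k n))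
    (𝒲 : Finset (Set (FV k n))) (vf wf : Finset (Set (FV k n)) → FV k n)
    (hW : ∀ W ∈ 𝒲, IsWhiteComp (starForest k n) B W) (hcard : q + 1 ≤ 𝒲.card)
    (hforce : ∀ 𝒮 : Finset (Set (FV k n)), 𝒮 ⊆ 𝒲 → 𝒮.Nonempty →
      ForceIn (starForest k n) B (⋃₀ (𝒮 : Set (Set (FV k n)))) (vf 𝒮) (wf 𝒮)) :
    ∃ 𝒮 : Finset (Set (FV k n)), 𝒮 ⊆ 𝒲 ∧ 𝒮.Nonempty ∧
      phi q B ≤ phi q (insert (wf 𝒮) B) := by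
  classical
  -- choose a base point for each announced component
  have hW' : ∀ W : {W // W ∈ 𝒲}, ∃ w : FV k n, w ∉ B ∧
      W.1 = WhiteComp (starForest k n) B w := fun W => hW W.1 W.2
  choose base hbaseW hbaseC using hW'
  set st : {W // W ∈ 𝒲} → Fin k := fun W => (base W).1 with hst
  -- distinct components lie in distinct stars
  have hinj : Function.Injective st := by
    intro W₁ W₂ heq
    set i := st W₁ with hi
    -- both components lie inside star i and are equal to white comps of their bases
    by_cases hc : ctr hn i ∈ B
    · -- the center is blue; use the force condition on the pair to identify the bases
      by_contra hne
      have hWne : W₁.1 ≠ W₂.1 := fun h => hne (Subtype.ext h)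
      set 𝒮 : Finset (Set (FV k n)) := {W₁.1, W₂.1} with h𝒮
      have hsub : 𝒮 ⊆ 𝒲 := by
        intro W hW'
        rcases Finset.mem_insert.1 hW' with h | h
        · exact h ▸ W₁.2
        · exact (Finset.mem_singleton.1 h) ▸ W₂.2
      have hne' : 𝒮.Nonempty := ⟨W₁.1, Finset.mem_insert_self _ _⟩
      obtain ⟨hv, hw, hwall, hadj, huniq⟩ := hforce 𝒮 hsub hne'
      have hall : ⋃₀ (𝒮 : Set (Set (FV k n))) = W₁.1 ∪ W₂.1 := by
        simp [h𝒮]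
      -- the forced vertex is a white leaf of star i
      have hwfst : (wf 𝒮).1 = i := by
        rw [hall] at hwall
        rcases hwall with h | h
        · rw [hbaseC W₁] at h
          exact (whiteComp_fst h).symm.trans hi.symm
        · rw [hbaseC W₂] at h
          exact (whiteComp_fst h).symm.trans heq.symm
      -- the forcing vertex is the center
      have hwleaf : ((wf 𝒮).2 : ℕ) ≠ 0 := by
        intro h0
        apply hw
        rw [eq_ctr' hn hwfst h0]
        exact hc
      have hvc : vf 𝒮 = ctr hn i := eq_ctr_of_adj_leaf' hn hwfst hwleaf hadj
      -- both base points must equal the forced vertex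
      have hbase_eq : ∀ (W : {W // W ∈ 𝒲}), st W = i → W.1 ∈ (𝒮 : Set (Set (FV k n))) →
          base W = wf 𝒮 := by
        intro W hWi hWS
        apply huniq
        · rw [hvc]
          refine adj_ctr_leaf' hn hWi ?_
          intro h0
          apply hbaseW W
          rw [eq_ctr' hn hWi h0]
          exact hc
        · exact hbaseW W
        · refine Set.mem_sUnion.2 ⟨W.1, hWS, ?_⟩
          rw [hbaseC W]
          exact mem_whiteComp_self _
      have h₁ : base W₁ = wf 𝒮 := by
        apply hbase_eq W₁ hi.symm
        simp [h𝒮]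
      have h₂ : base W₂ = wf 𝒮 := by
        apply hbase_eq W₂ heq.symm (by simp [h𝒮])
      apply hWne
      rw [hbaseC W₁, hbaseC W₂, h₁, h₂]
    · -- the center is white: both components equal the full white part of star i
      have h21 : base W₂ ∈ WhiteComp (starForest k n) B (base W₁) := by
        apply mem_whiteComp_of_star hn hc (hbaseW W₁) (hbaseW W₂) hi.symm
        exact heq.symm
      apply Subtype.ext
      rw [hbaseC W₁, hbaseC W₂, whiteComp_eq_of_mem h21]
  -- the set of announced stars
  set stars : Finset (Fin k) := 𝒲.attach.image st with hstars
  have hstcard : q + 1 ≤ stars.card := by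
    rw [hstars, Finset.card_image_of_injective _ hinj, Finset.card_attach]
    exact hcard
  have hqk : q + 1 ≤ k := le_trans hstcard (by simpa using Finset.card_le_univ stars)
  -- pick the announced component whose star has minimal delta
  obtain ⟨Wm, hWmmem, hWmmin⟩ := Finset.exists_min_image 𝒲.attach (fun W => dlt B (st W))
    (by rw [← Finset.card_pos, Finset.card_attach]; omega)
  refine ⟨{Wm.1}, Finset.singleton_subset_iff.2 Wm.2, Finset.singleton_nonempty _, ?_⟩
  set 𝒮 := ({Wm.1} : Finset (Set (FV k n))) with h𝒮
  obtain ⟨hv, hw, hwall, hadj, -⟩ :=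
    hforce 𝒮 (Finset.singleton_subset_iff.2 Wm.2) (Finset.singleton_nonempty _)
  set x := wf 𝒮 with hx
  set iS := st Wm with hiS
  have hxW : x ∈ Wm.1 := by
    have hsu : ⋃₀ ((𝒮 : Finset (Set (FV k n))) : Set (Set (FV k n))) = Wm.1 := by
      simp [h𝒮]
    rw [hsu] at hwall
    exact hwall
  have hxfst : x.1 = iS := by
    have := hxW
    rw [hbaseC Wm] at this
    exact (whiteComp_fst this).symm
  have hvfst : (vf 𝒮).1 = iS := (adj_fst hadj).trans hxfst
  have hnA : ¬ allW B iS := not_allW_of_mem' hv hvfst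
  set B' := insert x B with hB'
  have hnA' : ¬ allW B' iS := not_allW_insert hnA
  have hreq : ∀ j, rho B' j = rho B j := by
    intro j
    by_cases hj : j = iS
    · subst hj
      rw [rho, rho, if_neg hnA, if_neg hnA']
    · exact rho_insert_of_fst_ne (hxfst.trans_ne (Ne.symm hj))
  have hdoff : ∀ j, j ≠ iS → dlt B j ≤ dlt B' j := by
    intro j hj
    exact (dlt_insert_of_fst_ne (hxfst.trans_ne (Ne.symm hj))).ge
  have hiSmem : iS ∈ stars := by
    rw [hstars]
    exact Finset.mem_image.2 ⟨Wm, Finset.mem_attach _ _, rfl⟩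
  have hbig : ∀ j ∈ stars.erase iS, dlt B iS ≤ dlt B' j := by
    intro j hj
    obtain ⟨hjne, hjs⟩ := Finset.mem_erase.1 hj
    rw [dlt_insert_of_fst_ne (hxfst.trans_ne (Ne.symm hjne))]
    rw [hstars] at hjs
    obtain ⟨W', -, hW'⟩ := Finset.mem_image.1 hjs
    rw [← hW']
    exact hWmmin W' (Finset.mem_attach _ _)
  have hcard' : min q k ≤ (stars.erase iS).card := by
    rw [Finset.card_erase_of_mem hiSmem]
    have := min_le_left q k
    omega
  have ht : topq (min q k) (dlt B) ≤ topq (min q k) (dlt B') :=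
    topq_swap iS (stars.erase iS) hdoff (Finset.notMem_erase _ _) hcard' hbig
  have hsum : ∑ j, rho B j = ∑ j, rho B' j :=
    Finset.sum_congr rfl fun j _ => (hreq j).symm
  unfold phi
  exact Nat.add_le_add (le_of_eq hsum) ht

lemma phi_univ (hn : ∀ i, 1 ≤ n i) (q : ℕ) {B : Set (FV k n)} (h : ∀ v, v ∈ B) :
    phi q B = 0 := by
  have hnA : ∀ i, ¬ allW B i := fun i => not_allW_of_mem (h ⟨i, ⟨0, hn i⟩⟩)
  have hrho : ∀ i, rho B i = 0 := fun i => if_neg (hnA i)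
  have hdlt : ∀ i : Fin k, dlt B i = 0 := by
    intro i
    rw [dlt, if_neg (hnA i)]
    have h0 : wcount B i = 0 := wcount_eq_zero_iff.2 fun j _ => h _
    omega
  have htq : topq (min q k) (dlt B) = 0 :=
    Nat.eq_zero_of_le_zero (Finset.sup_le fun s _ =>
      le_of_eq (Finset.sum_eq_zero fun i _ => hdlt i))
  unfold phi
  rw [Finset.sum_eq_zero fun i _ => hrho i, htq]

lemma win_lower (hn : ∀ i, 1 ≤ n i) {q : ℕ} {B : Set (FV k n)} {t : ℕ}
    (h : Win (starForest k n) q B t) : phi q B ≤ t := by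
  induction h with
  | all B t hall =>
    rw [phi_univ hn q hall]
    exact Nat.zero_le t
  | rule1 B t v hwin ih =>
    exact le_trans (phi_insert_le hn q B v) (Nat.add_le_add_right ih 1)
  | rule2 B t v w hf hwin ih =>
    exact le_trans (phi_force_le hn q hf) ih
  | rule3 B t 𝒲 vf wf hW hcard hforce hwin ih =>
    obtain ⟨𝒮, hsub, hne, hle⟩ := phi_rule3 hn q B 𝒲 vf wf hW hcard hforce
    exact le_trans hle (ih 𝒮 hsub hne)

lemma dlt_empty : ∀ i : Fin k, dlt (∅ : Set (FV k n)) i = n i - 3 := by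
  intro i
  rw [dlt, if_pos]
  intro j
  exact Set.notMem_empty _

lemma phi_empty (q : ℕ) (hmono : ∀ i j, i ≤ j → j < k → n j ≤ n i) :
    phi q (∅ : Set (FV k n)) = k + ∑ i ∈ Finset.range (min q k), (n i - 3) := by
  have hanti : ∀ i j : Fin k, i ≤ j → dlt (∅ : Set (FV k n)) j ≤ dlt (∅ : Set (FV k n)) i := by
    intro i j hij
    rw [dlt_empty, dlt_empty]
    exact Nat.sub_le_sub_right (hmono i j hij j.isLt) 3
  have ht := topq_antitone (min q k) (min_le_right q k) hanti
  have hrho : ∀ i : Fin k, rho (∅ : Set (FV k n)) i = 1 := by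
    intro i
    rw [rho, if_pos]
    intro j
    exact Set.notMem_empty _
  unfold phi
  rw [Finset.sum_congr rfl fun i _ => hrho i, ht]
  simp only [Finset.sum_const, Finset.card_univ, Fintype.card_fin, smul_eq_mul, mul_one]
  congr 1
  have : ∀ j : Fin (min q k), dlt (∅ : Set (FV k n)) (Fin.castLE (min_le_right q k) j)
      = n (j : ℕ) - 3 := by
    intro j
    rw [dlt_empty]
    rfl
  rw [Finset.sum_congr rfl fun j _ => this j]
  exact Fin.sum_univ_eq_sum_range (fun j => n j - 3) (min q k)

lemma win_mono {V : Type*} {G : SimpleGraph V} {q : ℕ} {B : Set V} {t : ℕ}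
    (h : Win G q B t) : ∀ t', t ≤ t' → Win G q B t' := by
  induction h with
  | all B t hall => exact fun t' _ => Win.all B t' hall
  | rule1 B t v hwin ih =>
    intro t' ht'
    cases t' with
    | zero => omega
    | succ t'' => exact Win.rule1 B t'' v (ih t'' (by omega))
  | rule2 B t v w hf hwin ih =>
    exact fun t' ht' => Win.rule2 B t' v w hf (ih t' ht')
  | rule3 B t 𝒲 vf wf hW hcard hforce hwin ih =>
    exact fun t' ht' => Win.rule3 B t' 𝒲 vf wf hW hcard hforce
      (fun 𝒮 hsub hne => ih 𝒮 hsub hne t' ht')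

lemma win_union_finset {V : Type*} [DecidableEq V] {G : SimpleGraph V} {q : ℕ}
    (s : Finset V) : ∀ (B : Set V) (t : ℕ), Win G q (↑s ∪ B) t → Win G q B (t + s.card) := by
  induction s using Finset.induction with
  | empty => intro B t h; simpa using h
  | @insert a s ha ih =>
    intro B t h
    have h1 : Win G q (insert a (↑s ∪ B)) t := by
      have he : ((insert a s : Finset V) : Set V) ∪ B = insert a (↑s ∪ B) := by
        simp [Set.insert_union]
      rw [← he]
      exact h
    have h2 : Win G q (↑s ∪ B) (t + 1) := Win.rule1 _ _ _ h1
    have h3 : Win G q B (t + 1 + s.card) := ih B (t + 1) h2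
    rw [Finset.card_insert_of_notMem ha]
    exact win_mono h3 _ (by omega)

lemma win_centers (hn : ∀ i, 1 ≤ n i) {q : ℕ} : ∀ (c : ℕ) (B : Set (FV k n)),
    (Finset.univ.filter fun i : Fin k => ctr hn i ∉ B).card ≤ c →
    (∀ i : Fin k, ctr hn i ∈ B ∨ ∃ j : Fin (n i), (j : ℕ) ≠ 0 ∧ (⟨i, j⟩ : FV k n) ∈ B) →
    ∀ t, Win (starForest k n) q (B ∪ Set.range (ctr hn)) t → Win (starForest k n) q B t := by
  intro c
  induction c with
  | zero =>
    intro B hc hleaf t h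
    have hsub : Set.range (ctr hn) ⊆ B := by
      rintro v ⟨i, rfl⟩
      by_contra hv
      have : i ∈ Finset.univ.filter fun i : Fin k => ctr hn i ∉ B := by simp [hv]
      rw [Finset.card_eq_zero.1 (Nat.le_zero.1 hc)] at this
      simp at this
    rwa [Set.union_eq_self_of_subset_right hsub] at h
  | succ c ih =>
    intro B hc hleaf t h
    by_cases hall : ∀ i : Fin k, ctr hn i ∈ B
    · have hsub : Set.range (ctr hn) ⊆ B := by
        rintro v ⟨i, rfl⟩
        exact hall i
      rwa [Set.union_eq_self_of_subset_right hsub] at h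
    · push_neg at hall
      obtain ⟨i, hi⟩ := hall
      rcases hleaf i with hcm | ⟨j, hj, hjB⟩
      · exact absurd hcm hi
      · -- the blue leaf forces the center of star i
        have hforce : Force (starForest k n) B (⟨i, j⟩ : FV k n) (ctr hn i) := by
          refine ⟨hjB, hi, trivial, (adj_ctr_leaf hn hj).symm, ?_⟩
          intro u hadj hu _
          exact eq_ctr_of_adj_leaf hn hj hadj.symm
        refine Win.rule2 B t _ _ hforce ?_
        set B' := insert (ctr hn i) B with hB'
        have hcard' : (Finset.univ.filter fun i' : Fin k => ctr hn i' ∉ B').card ≤ c := by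
          have hsub : (Finset.univ.filter fun i' : Fin k => ctr hn i' ∉ B')
              ⊆ (Finset.univ.filter fun i' : Fin k => ctr hn i' ∉ B).erase i := by
            intro i' hi'
            simp only [Finset.mem_filter, Finset.mem_univ, true_and, hB',
              Set.mem_insert_iff, not_or] at hi'
            refine Finset.mem_erase.2 ⟨?_, by simp [hi'.2]⟩
            intro he
            exact hi'.1 (by rw [he])
          have h2 := Finset.card_le_card hsub
          have h3 : i ∈ Finset.univ.filter fun i' : Fin k => ctr hn i' ∉ B := by simp [hi]
          have h4 := Finset.card_erase_of_mem h3
          omega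
        have hleaf' : ∀ i' : Fin k, ctr hn i' ∈ B' ∨
            ∃ j' : Fin (n i'), (j' : ℕ) ≠ 0 ∧ (⟨i', j'⟩ : FV k n) ∈ B' := by
          intro i'
          rcases hleaf i' with h' | ⟨j', hj', hjB'⟩
          · exact Or.inl (Set.mem_insert_of_mem _ h')
          · exact Or.inr ⟨j', hj', Set.mem_insert_of_mem _ hjB'⟩
        refine ih B' hcard' hleaf' t ?_
        have he : B' ∪ Set.range (ctr hn) = B ∪ Set.range (ctr hn) := by
          rw [hB', Set.insert_union]
          rw [Set.insert_eq_of_mem]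
          exact Set.mem_union_right _ ⟨i, rfl⟩
        rwa [he]

lemma whiteComp_singleton (hn : ∀ i, 1 ≤ n i) {B : Set (FV k n)} {i : Fin k}
    (hc : ctr hn i ∈ B) {x : FV k n} (hx : x ∉ B) (hxf : x.1 = i) :
    WhiteComp (starForest k n) B x = {x} := by
  ext y
  simp only [Set.mem_singleton_iff]
  constructor
  · intro hy
    simp only [WhiteComp, Set.mem_setOf_eq] at hy
    induction hy with
    | refl => rfl
    | tail hst hrel ih =>
      exfalso
      rw [ih] at hrel
      obtain ⟨hadj, hxB, hcB⟩ := hrel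
      have hx2 : (x.2 : ℕ) ≠ 0 := by
        intro h0
        exact hx ((eq_ctr' hn hxf h0) ▸ hc)
      obtain ⟨-, hfst, h2⟩ := adj_iff.1 hadj
      rcases h2 with h2 | h2
      · exact hx2 h2
      · exact hcB ((eq_ctr' hn (hfst.symm.trans hxf) h2) ▸ hc)
  · rintro rfl
    exact mem_whiteComp_self _

lemma sum_wcount_insert_le {B : Set (FV k n)} {i : Fin k} {a : Fin (n i)}
    (ha : (a : ℕ) ≠ 0) (haB : (⟨i, a⟩ : FV k n) ∉ B) {Wt : ℕ}
    (hW : ∑ i', wcount B i' ≤ Wt + 1) :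
    ∑ i', wcount (insert (⟨i, a⟩ : FV k n) B) i' ≤ Wt := by
  have hdec := wcount_insert_mk_eq B ha haB
  have hpos := wcount_pos_of_white_leaf ha haB
  rw [← Finset.add_sum_erase _ (wcount B) (Finset.mem_univ i)] at hW
  rw [← Finset.add_sum_erase _ (wcount (insert (⟨i, a⟩ : FV k n) B)) (Finset.mem_univ i)]
  have he : ∑ j ∈ Finset.univ.erase i, wcount (insert (⟨i, a⟩ : FV k n) B) j
      = ∑ j ∈ Finset.univ.erase i, wcount B j :=
    Finset.sum_congr rfl fun j hj =>
      wcount_insert_of_fst_ne (show i ≠ j from (Finset.ne_of_mem_erase hj).symm)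
  rw [he, hdec]
  omega

lemma win_all_blue (hn : ∀ i, 1 ≤ n i) {q t : ℕ} {B : Set (FV k n)}
    (hctr : ∀ i, ctr hn i ∈ B) (h0 : ∀ i, wcount B i = 0) :
    Win (starForest k n) q B t := by
  refine Win.all _ _ ?_
  rintro ⟨i, j⟩
  by_cases hj : (j : ℕ) = 0
  · rw [eq_ctr' hn (x := (⟨i, j⟩ : FV k n)) rfl hj]
    exact hctr i
  · exact wcount_eq_zero_iff.1 (h0 i) j hj

lemma win_subgame (hn : ∀ i, 1 ≤ n i) (q : ℕ) : ∀ (Wt : ℕ) (B : Set (FV k n)),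
    (∀ i : Fin k, ctr hn i ∈ B) → (∑ i, wcount B i ≤ Wt) →
    Win (starForest k n) q B (topq (min q k) (fun i => wcount B i - 1)) := by
  intro Wt
  induction Wt with
  | zero =>
    intro B hctr hW
    refine win_all_blue hn hctr fun i => ?_
    exact Finset.sum_eq_zero_iff.1 (Nat.le_zero.1 hW) i (Finset.mem_univ i)
  | succ Wt ih =>
    intro B hctr hW
    by_cases h1 : ∃ i : Fin k, wcount B i = 1
    · -- a star with exactly one white leaf: force it for free
      obtain ⟨i, hi⟩ := h1
      have hi' : (Finset.univ.filter fun j : Fin (n i) =>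
          (j : ℕ) ≠ 0 ∧ (⟨i, j⟩ : FV k n) ∉ B).card = 1 := hi
      obtain ⟨j, hjeq⟩ := Finset.card_eq_one.1 hi'
      have hjmem : j ∈ Finset.univ.filter fun j : Fin (n i) =>
          (j : ℕ) ≠ 0 ∧ (⟨i, j⟩ : FV k n) ∉ B := by
        rw [hjeq]; exact Finset.mem_singleton_self j
      simp only [Finset.mem_filter, Finset.mem_univ, true_and] at hjmem
      obtain ⟨hj0, hjB⟩ := hjmem
      have hforce : Force (starForest k n) B (ctr hn i) (⟨i, j⟩ : FV k n) := by
        refine ⟨hctr i, hjB, trivial, adj_ctr_leaf hn hj0, ?_⟩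
        rintro ⟨iu, ju⟩ hadj hu -
        have hfst : iu = i := (adj_fst hadj).symm
        subst hfst
        have hju0 : (ju : ℕ) ≠ 0 := by
          intro h0
          exact (adj_iff.1 hadj).1 ((eq_ctr' hn (x := (⟨iu, ju⟩ : FV k n)) rfl h0).symm ▸ rfl)
        have : ju ∈ Finset.univ.filter fun j' : Fin (n iu) =>
            (j' : ℕ) ≠ 0 ∧ (⟨iu, j'⟩ : FV k n) ∉ B := by
          simp [hju0, hu]
        rw [hjeq, Finset.mem_singleton] at this
        rw [this]
      set B' := insert (⟨i, j⟩ : FV k n) B with hB'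
      have hctr' : ∀ i', ctr hn i' ∈ B' := fun i' => Set.mem_insert_of_mem _ (hctr i')
      have hWle : ∑ i', wcount B' i' ≤ Wt := sum_wcount_insert_le hj0 hjB hW
      have hwin := ih B' hctr' hWle
      have hfun : (fun i' => wcount B' i' - 1) = (fun i' => wcount B i' - 1) := by
        funext i'
        by_cases hii : i' = i
        · subst hii
          rw [wcount_insert_mk_eq B hj0 hjB, hi]
        · rw [wcount_insert_of_fst_ne (show (⟨i, j⟩ : FV k n).1 ≠ i' from fun c => hii c.symm)]
      rw [hfun] at hwin
      exact Win.rule2 B _ _ _ hforce hwin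
    · by_cases h2 : ∃ i : Fin k, 2 ≤ wcount B i
      · set P := Finset.univ.filter (fun i : Fin k => 2 ≤ wcount B i) with hP
        obtain ⟨i₀, hi₀⟩ := h2
        have hi₀P : i₀ ∈ P := by simp [hP, hi₀]
        -- a chosen white leaf in each active star
        have hpk : ∀ i ∈ P, ∃ a : Fin (n i), (a : ℕ) ≠ 0 ∧ (⟨i, a⟩ : FV k n) ∉ B := by
          intro i hiP
          simp only [hP, Finset.mem_filter, Finset.mem_univ, true_and] at hiP
          have hpos : 0 < (Finset.univ.filter fun j : Fin (n i) =>
              (j : ℕ) ≠ 0 ∧ (⟨i, j⟩ : FV k n) ∉ B).card := by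
            have : (0 : ℕ) < wcount B i := by omega
            exact this
          obtain ⟨a, ha⟩ := Finset.card_pos.1 hpos
          simp only [Finset.mem_filter, Finset.mem_univ, true_and] at ha
          exact ⟨a, ha.1, ha.2⟩
        by_cases hPq : P.card ≤ q
        · -- too few active stars : spend a token on a white leaf of i₀
          obtain ⟨a₀, ha₀0, ha₀B⟩ := hpk i₀ hi₀P
          set B' := insert (⟨i₀, a₀⟩ : FV k n) B with hB'
          have hctr' : ∀ i', ctr hn i' ∈ B' := fun i' => Set.mem_insert_of_mem _ (hctr i')
          have hWle : ∑ i', wcount B' i' ≤ Wt := sum_wcount_insert_le ha₀0 ha₀B hW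
          have hwin := ih B' hctr' hWle
          have hwin1 := Win.rule1 B _ _ hwin
          refine win_mono hwin1 _ ?_
          -- topq (wcount B' - 1) + 1 ≤ topq (wcount B - 1)
          have hPm : P.card ≤ min q k :=
            le_min hPq (le_trans (Finset.card_le_univ P) (by simp))
          obtain ⟨s, hPs, hscard⟩ := Finset.exists_superset_card_eq hPm (by simp)
          have hi₀s : i₀ ∈ s := hPs hi₀P
          have hoff : ∀ j, j ≠ i₀ → wcount B' j = wcount B j := fun j hj =>
            wcount_insert_of_fst_ne (show (⟨i₀, a₀⟩ : FV k n).1 ≠ j from fun c => hj c.symm)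
          have hsupp : ∀ j ∉ s, wcount B' j - 1 = 0 := by
            intro j hjs
            have hjP : j ∉ P := fun c => hjs (hPs c)
            have hj2 : ¬ 2 ≤ wcount B j := by
              intro c
              exact hjP (by simp [hP, c])
            have hj1 : wcount B j ≠ 1 := fun c => h1 ⟨j, c⟩
            have hji₀ : j ≠ i₀ := fun c => hjs (c ▸ hi₀s)
            rw [hoff j hji₀]
            omega
          have hT' : topq (min q k) (fun i' => wcount B' i' - 1)
              ≤ ∑ j ∈ s, (wcount B' j - 1) := topq_le_of_support hsupp
          have hTT : ∑ j ∈ s, (wcount B j - 1) ≤ topq (min q k) (fun i' => wcount B i' - 1) :=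
            le_topq _ hscard
          have hsplit : ∑ j ∈ s, (wcount B' j - 1) + 1 ≤ ∑ j ∈ s, (wcount B j - 1) := by
            rw [← Finset.add_sum_erase _ (fun j => wcount B' j - 1) hi₀s,
              ← Finset.add_sum_erase _ (fun j => wcount B j - 1) hi₀s]
            have he : ∑ j ∈ s.erase i₀, (wcount B' j - 1)
                = ∑ j ∈ s.erase i₀, (wcount B j - 1) :=
              Finset.sum_congr rfl fun j hj => by
                rw [hoff j (Finset.ne_of_mem_erase hj)]
            have hd := wcount_insert_mk_eq B ha₀0 ha₀B
            rw [← hB'] at hd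
            have h2' : 2 ≤ wcount B i₀ := hi₀
            omega
          omega
        · -- at least q+1 active stars : play Rule 3
          push_neg at hPq
          classical
          set pk : Fin k → FV k n := fun i =>
            if h : ∃ a : Fin (n i), (a : ℕ) ≠ 0 ∧ (⟨i, a⟩ : FV k n) ∉ B
            then ⟨i, h.choose⟩ else ctr hn i with hpkdef
          have hpkP : ∀ i ∈ P, ((pk i).1 = i) ∧ ((pk i).2 : ℕ) ≠ 0 ∧ pk i ∉ B := by
            intro i hiP
            have h := hpk i hiP
            have hpkeq : pk i = ⟨i, h.choose⟩ := dif_pos h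
            rw [hpkeq]
            exact ⟨rfl, h.choose_spec.1, h.choose_spec.2⟩
          set 𝒲 : Finset (Set (FV k n)) := P.image (fun i => ({pk i} : Set (FV k n)))
            with h𝒲
          have hpkinj : ∀ i ∈ P, ∀ i' ∈ P, pk i = pk i' → i = i' := by
            intro i hi i' hi' he
            have h1' := (hpkP i hi).1
            have h2' := (hpkP i' hi').1
            rw [← h1', ← h2', he]
          have hcard𝒲 : q + 1 ≤ 𝒲.card := by
            rw [h𝒲, Finset.card_image_of_injOn]
            · omega
            · intro i hi i' hi' he
              exact hpkinj i hi i' hi' (Set.singleton_eq_singleton_iff.1 he)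
          have hWcomp : ∀ W ∈ 𝒲, IsWhiteComp (starForest k n) B W := by
            intro W hW'
            obtain ⟨i, hiP, rfl⟩ := Finset.mem_image.1 hW'
            obtain ⟨hf, hs, hb⟩ := hpkP i hiP
            exact ⟨pk i, hb, (whiteComp_singleton hn (hctr i) hb hf).symm⟩
          set i0 : Finset (Set (FV k n)) → Fin k := fun 𝒮 =>
            if h : (P.filter fun i => ({pk i} : Set (FV k n)) ∈ 𝒮).Nonempty
            then (P.filter fun i => ({pk i} : Set (FV k n)) ∈ 𝒮).min' h else i₀ with hi0def
          have hi0 : ∀ 𝒮 : Finset (Set (FV k n)), 𝒮 ⊆ 𝒲 → 𝒮.Nonempty →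
              i0 𝒮 ∈ P ∧ ({pk (i0 𝒮)} : Set (FV k n)) ∈ 𝒮 := by
            intro 𝒮 hsub hne
            obtain ⟨W, hWmem⟩ := hne
            obtain ⟨i, hiP, rfl⟩ := Finset.mem_image.1 (hsub hWmem)
            have hnef : (P.filter fun i => ({pk i} : Set (FV k n)) ∈ 𝒮).Nonempty :=
              ⟨i, Finset.mem_filter.2 ⟨hiP, hWmem⟩⟩
            have hmin := Finset.min'_mem _ hnef
            have hieq : i0 𝒮 = (P.filter fun i => ({pk i} : Set (FV k n)) ∈ 𝒮).min' hnef :=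
              dif_pos hnef
            rw [hieq]
            exact ⟨(Finset.mem_filter.1 hmin).1, (Finset.mem_filter.1 hmin).2⟩
          have hforce : ∀ 𝒮 : Finset (Set (FV k n)), 𝒮 ⊆ 𝒲 → 𝒮.Nonempty →
              ForceIn (starForest k n) B (⋃₀ ((𝒮 : Finset (Set (FV k n))) : Set (Set (FV k n))))
                (ctr hn (i0 𝒮)) (pk (i0 𝒮)) := by
            intro 𝒮 hsub hne
            obtain ⟨hi0P, hi0mem⟩ := hi0 𝒮 hsub hne
            obtain ⟨hf, hs, hb⟩ := hpkP _ hi0P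
            refine ⟨hctr _, hb, ?_, adj_ctr_leaf' hn hf hs, ?_⟩
            · exact Set.mem_sUnion.2 ⟨{pk (i0 𝒮)}, by simpa using hi0mem, rfl⟩
            · intro u hadj hu huW
              obtain ⟨W', hW'mem, huW'⟩ := Set.mem_sUnion.1 huW
              have hW'𝒲 : W' ∈ 𝒲 := hsub (by simpa using hW'mem)
              obtain ⟨i', hi'P, rfl⟩ := Finset.mem_image.1 hW'𝒲
              have hu' : u = pk i' := huW'
              have hfst : i0 𝒮 = u.1 := adj_fst hadj
              rw [hu', (hpkP i' hi'P).1] at hfst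
              rw [hu', ← hfst]
          have hwin3 : ∀ 𝒮 : Finset (Set (FV k n)), 𝒮 ⊆ 𝒲 → 𝒮.Nonempty →
              Win (starForest k n) q (insert (pk (i0 𝒮)) B)
                (topq (min q k) (fun i' => wcount B i' - 1)) := by
            intro 𝒮 hsub hne
            obtain ⟨hi0P, -⟩ := hi0 𝒮 hsub hne
            have h := hpk _ hi0P
            have hpkeq : pk (i0 𝒮) = ⟨i0 𝒮, h.choose⟩ := dif_pos h
            rw [hpkeq]
            set B' := insert (⟨i0 𝒮, h.choose⟩ : FV k n) B with hB'
            have hctr' : ∀ i', ctr hn i' ∈ B' := fun i' => Set.mem_insert_of_mem _ (hctr i')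
            have hWle : ∑ i', wcount B' i' ≤ Wt :=
              sum_wcount_insert_le h.choose_spec.1 h.choose_spec.2 hW
            have hwin := ih B' hctr' hWle
            refine win_mono hwin _ (topq_mono fun j => ?_)
            by_cases hj : j = i0 𝒮
            · subst hj
              have hle := wcount_insert_mk_le B h.choose
              rw [← hB'] at hle
              omega
            · rw [wcount_insert_of_fst_ne
                (show (⟨i0 𝒮, h.choose⟩ : FV k n).1 ≠ j from fun c => hj c.symm)]
          exact Win.rule3 B _ 𝒲 (fun 𝒮 => ctr hn (i0 𝒮)) (fun 𝒮 => pk (i0 𝒮))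
            hWcomp hcard𝒲 hforce hwin3
      · -- no star has any white leaf left
        push_neg at h1 h2
        refine win_all_blue hn hctr fun i => ?_
        have := h1 i
        have := h2 i
        omega

section Final
variable (hn : ∀ i, 1 ≤ n i)

/-- the initial token in star `i` : leaf `1` if it exists, else the center -/
noncomputable def tok (i : Fin k) : FV k n :=
  if h : 1 < n i then ⟨i, ⟨1, h⟩⟩ else ctr hn i

lemma tok_fst (i : Fin k) : (tok hn i).1 = i := by
  rw [tok]
  split <;> rfl

lemma card_tokens : ((Finset.univ : Finset (Fin k)).image (tok hn)).card = k := by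
  rw [Finset.card_image_of_injective _ fun i i' he => by
    rw [← tok_fst hn i, ← tok_fst hn i', he], Finset.card_univ, Fintype.card_fin]

lemma wcount_start (i : Fin k) :
    wcount (((Finset.univ.image (tok hn) : Finset (FV k n)) : Set (FV k n)) ∪ Set.range (ctr hn)) i
      = n i - 2 := by
  set B₂ : Set (FV k n) :=
    ((Finset.univ.image (tok hn) : Finset (FV k n)) : Set (FV k n)) ∪ Set.range (ctr hn)
    with hB₂
  have hmem : ∀ j : Fin (n i), (j : ℕ) ≠ 0 → ((⟨i, j⟩ : FV k n) ∈ B₂ ↔ (j : ℕ) = 1) := by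
    intro j hj
    constructor
    · intro hmem
      rcases hmem with hmem | ⟨i', hi'⟩
      · simp only [Finset.coe_image, Finset.coe_univ, Set.image_univ, Set.mem_range] at hmem
        obtain ⟨i', hi'⟩ := hmem
        have hfst : i' = i := by
          rw [← tok_fst hn i', hi']
        subst hfst
        rw [tok] at hi'
        split at hi'
        · rw [← mk_eq_mk.1 hi']
        · exfalso
          apply hj
          rw [← mk_eq_mk.1 hi']
      · exfalso
        apply hj
        have hfst : i' = i := congrArg Sigma.fst hi'
        subst hfst
        rw [← mk_eq_mk.1 hi']
    · intro h1
      have hlt : 1 < n (i : ℕ) := lt_of_le_of_lt (by omega : 1 ≤ (j : ℕ)) j.isLt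
      left
      simp only [Finset.coe_image, Finset.coe_univ, Set.image_univ, Set.mem_range]
      refine ⟨i, ?_⟩
      have htok : tok hn i = ⟨i, ⟨1, hlt⟩⟩ := dif_pos hlt
      rw [htok]
      exact mk_eq_mk.2 (Fin.ext h1.symm)
  by_cases h2 : 2 ≤ n i
  · have hfe : (Finset.univ.filter fun j : Fin (n i) =>
        (j : ℕ) ≠ 0 ∧ (⟨i, j⟩ : FV k n) ∉ B₂)
        = (Finset.univ.erase ⟨0, hn i⟩).erase ⟨1, h2⟩ := by
      ext j
      simp only [Finset.mem_filter, Finset.mem_univ, true_and, Finset.mem_erase, and_true]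
      constructor
      · rintro ⟨hj0, hjB⟩
        constructor
        · intro he
          apply hjB
          rw [hmem j hj0]
          rw [he]
        · intro he
          apply hj0
          rw [he]
      · rintro ⟨hj1, hj0⟩
        have hj0' : (j : ℕ) ≠ 0 := fun c => hj0 (Fin.ext c)
        refine ⟨hj0', ?_⟩
        rw [hmem j hj0']
        intro c
        exact hj1 (Fin.ext c)
    rw [wcount, hfe]
    rw [Finset.card_erase_of_mem, Finset.card_erase_of_mem (Finset.mem_univ _),
      Finset.card_univ, Fintype.card_fin]
    · omega
    · refine Finset.mem_erase.2 ⟨?_, Finset.mem_univ _⟩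
      intro c
      have := congrArg Fin.val c
      simp at this
  · have h1 : n (i : ℕ) = 1 := by
      have := hn i
      omega
    have h0 : wcount B₂ i = 0 := by
      apply wcount_eq_zero_iff.2
      intro j hj
      exfalso
      apply hj
      have := j.isLt
      omega
    omega

lemma win_start (hn : ∀ i, 1 ≤ n i) (hmono : ∀ i j, i ≤ j → j < k → n j ≤ n i) (q : ℕ) :
    Win (starForest k n) q (∅ : Set (FV k n))
      (k + ∑ i ∈ Finset.range (min q k), (n i - 3)) := by
  set B₂ : Set (FV k n) :=
    ((Finset.univ.image (tok hn) : Finset (FV k n)) : Set (FV k n)) ∪ Set.range (ctr hn)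
    with hB₂
  have hctr : ∀ i : Fin k, ctr hn i ∈ B₂ := fun i => Set.mem_union_right _ ⟨i, rfl⟩
  have hsub := win_subgame hn q (∑ i, wcount B₂ i) B₂ hctr le_rfl
  -- compute the budget of the subgame
  have hanti : ∀ i j : Fin k, i ≤ j → wcount B₂ j - 1 ≤ wcount B₂ i - 1 := by
    intro i j hij
    rw [wcount_start hn, wcount_start hn]
    have hle := hmono (i : ℕ) (j : ℕ) hij j.isLt
    omega
  have hT : topq (min q k) (fun i => wcount B₂ i - 1)
      = ∑ i ∈ Finset.range (min q k), (n i - 3) := by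
    rw [topq_antitone (min q k) (min_le_right q k) hanti]
    have he : ∀ j : Fin (min q k),
        wcount B₂ (Fin.castLE (min_le_right q k) j) - 1 = n (j : ℕ) - 3 := by
      intro j
      rw [wcount_start hn]
      simp only [Fin.coe_castLE]
      omega
    rw [Finset.sum_congr rfl fun j _ => he j]
    exact Fin.sum_univ_eq_sum_range (fun j => n j - 3) (min q k)
  rw [hT] at hsub
  -- force all centers from the tokens
  have hleaf : ∀ i : Fin k, ctr hn i ∈ ((Finset.univ.image (tok hn) : Finset (FV k n)) : Set (FV k n)) ∨
      ∃ j : Fin (n i), (j : ℕ) ≠ 0 ∧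
        (⟨i, j⟩ : FV k n) ∈ ((Finset.univ.image (tok hn) : Finset (FV k n)) : Set (FV k n)) := by
    intro i
    have htok : tok hn i ∈ ((Finset.univ.image (tok hn) : Finset (FV k n)) : Set (FV k n)) := by
      simp only [Finset.coe_image, Finset.coe_univ, Set.image_univ, Set.mem_range]
      exact ⟨i, rfl⟩
    by_cases h : 1 < n (i : ℕ)
    · right
      refine ⟨⟨1, h⟩, by simp, ?_⟩
      have : tok hn i = ⟨i, ⟨1, h⟩⟩ := dif_pos h
      rwa [this] at htok
    · left
      have : tok hn i = ctr hn i := dif_neg h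
      rwa [this] at htok
  have hwin1 : Win (starForest k n) q ((Finset.univ.image (tok hn) : Finset (FV k n)) : Set (FV k n))
      (∑ i ∈ Finset.range (min q k), (n i - 3)) :=
    win_centers hn k _ (le_trans (Finset.card_filter_le _ _) (by simp)) hleaf _ hsub
  have hwin2 : Win (starForest k n) q (∅ : Set (FV k n))
      ((∑ i ∈ Finset.range (min q k), (n i - 3)) +
        ((Finset.univ : Finset (Fin k)).image (tok hn)).card) := by
    apply win_union_finset
    rw [Set.union_empty]
    exact hwin1
  rw [card_tokens hn] at hwin2
  exact win_mono hwin2 _ (by omega)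

end Final

end ZqStarProof

open SimpleGraph

/-- `Z_q` of a forest of `k` stars `S_{n 0}, …, S_{n (k-1)}` with
`n 0 ≥ n 1 ≥ ⋯ ≥ n (k-1)` (each star nonempty): if `q < k` then
`Z_q = (k - q) + ∑_{i < q} Z(S_{n i})`, and if `q ≥ k` then
`Z_q = ∑_{i < k} Z(S_{n i})`, where `Z(S_m) = max 1 (m - 2)` is the standard zero
forcing number of the star on `m` vertices. -/
theorem Zq_starForest (k q : ℕ) (hk : 1 ≤ k) (n : ℕ → ℕ) (hn : ∀ i, 1 ≤ n i)
    (hmono : ∀ i j, i ≤ j → j < k → n j ≤ n i) :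
    ZqGame.Zq (ZqGame.starForest k n) q =
      if q < k then k - q + ∑ i ∈ Finset.range q, max 1 (n i - 2)
      else ∑ i ∈ Finset.range k, max 1 (n i - 2) := by
  classical
  have hupper := ZqStarProof.win_start (k := k) (n := n) hn hmono q
  have hne : {t | ZqGame.Win (ZqGame.starForest k n) q ∅ t}.Nonempty := ⟨_, hupper⟩
  have hval : ZqGame.Zq (ZqGame.starForest k n) q
      = k + ∑ i ∈ Finset.range (min q k), (n i - 3) := by
    rw [ZqGame.Zq, ZqGame.cost]
    apply le_antisymm
    · exact Nat.sInf_le hupper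
    · have hmem := Nat.sInf_mem hne
      have hlow := ZqStarProof.win_lower hn hmem
      rwa [ZqStarProof.phi_empty q hmono] at hlow
  rw [hval]
  have hmax : ∀ m : ℕ, max 1 (m - 2) = m - 3 + 1 := by
    intro m
    rcases le_or_gt m 3 with h | h
    · rw [max_eq_left (by omega)]
      omega
    · rw [max_eq_right (by omega)]
      omega
  by_cases hq : q < k
  · rw [if_pos hq]
    have hminq : min q k = q := min_eq_left (by omega)
    rw [hminq]
    have hsum : ∑ i ∈ Finset.range q, max 1 (n i - 2)
        = (∑ i ∈ Finset.range q, (n i - 3)) + q := by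
      rw [Finset.sum_congr rfl fun i _ => hmax (n i), Finset.sum_add_distrib]
      simp
    rw [hsum]
    omega
  · rw [if_neg hq]
    have hmink : min q k = k := min_eq_right (by omega)
    rw [hmink]
    have hsum : ∑ i ∈ Finset.range k, max 1 (n i - 2)
        = (∑ i ∈ Finset.range k, (n i - 3)) + k := by
      rw [Finset.sum_congr rfl fun i _ => hmax (n i), Finset.sum_add_distrib]
      simp
    rw [hsum]
    omega
end
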